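/- arXiv:1007.2706 — 15 statements merged into one kernel-verified Lean document; each statement's English description precedes it below -/
import Mathlib

section
/- Let G be a nontrivial group. Then G is finitely annihilated if and only if neither of the following holds: (1) G has weight 1 (G is the normal closure of a single element); (2) there exists g in G such that the quotient G/⟪g⟫^G of G by the normal closure of g has no proper finite-index subgroups. -/
/-- A group `G` is *finitely annihilated* if every element of `G` lies in some
proper normal finite-index subgroup of `G`. -/
def FinitelyAnnihilated (G : Type*) [Group G] : Prop :=
  ∀ g : G, ∃ N : Subgroup G, N.Normal ∧ N ≠ ⊤ ∧ N.FiniteIndex ∧ g ∈ N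

/-- The *weight* of a group `G`: the least `n` such that `G` is the normal
closure of some `n` of its elements (the trivial group has weight `0`). -/
noncomputable def weight (G : Type*) [Group G] : ℕ :=
  sInf {n : ℕ | ∃ S : Finset G, S.card = n ∧ Subgroup.normalClosure (S : Set G) = ⊤}

/-- A nontrivial group `G` is finitely annihilated iff neither (1) `G` has weight `1`,
nor (2) there is some `g ∈ G` such that `G / ⟪g⟫ᴳ` has no proper finite-index subgroups. -/
theorem finitelyAnnihilated_iff_not_weight_one_and_no_bad_element
    (G : Type*) [Group G] [Nontrivial G] :
    FinitelyAnnihilated G ↔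
      ¬ (weight G = 1) ∧
      ¬ (∃ g : G, ∀ H : Subgroup (G ⧸ Subgroup.normalClosure ({g} : Set G)),
            H.FiniteIndex → H = ⊤) := by
  constructor
  · intro hFA
    -- first show ¬(2), then derive ¬(1) from it
    have h2 : ¬ (∃ g : G, ∀ H : Subgroup (G ⧸ Subgroup.normalClosure ({g} : Set G)),
        H.FiniteIndex → H = ⊤) := by
      rintro ⟨g, hg⟩
      obtain ⟨N, hNnorm, hNne, hNfi, hgN⟩ := hFA g
      set K := Subgroup.normalClosure ({g} : Set G) with hK
      have hKN : K ≤ N := Subgroup.normalClosure_le_normal (by simpa using hgN)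
      set f := QuotientGroup.mk' K with hf
      have hker : f.ker = K := QuotientGroup.ker_mk' K
      have hsurj : Function.Surjective f := QuotientGroup.mk'_surjective K
      have hind : (N.map f).index = N.index :=
        N.index_map_eq hsurj (by rw [hker]; exact hKN)
      have hfi : (N.map f).FiniteIndex := ⟨by rw [hind]; exact hNfi.index_ne_zero⟩
      have htop := hg (N.map f) hfi
      apply hNne
      have := Subgroup.comap_map_eq f N
      rw [htop, Subgroup.comap_top, hker, sup_eq_left.mpr hKN] at this
      exact this.symm
    refine ⟨?_, h2⟩
    intro hw
    apply h2
    have hne : {n : ℕ | ∃ S : Finset G, S.card = n ∧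
        Subgroup.normalClosure (S : Set G) = ⊤}.Nonempty := by
      by_contra h
      rw [Set.not_nonempty_iff_eq_empty] at h
      rw [weight, h, Nat.sInf_empty] at hw
      exact one_ne_zero hw.symm
    have hmem := Nat.sInf_mem hne
    rw [← weight, hw] at hmem
    obtain ⟨S, hScard, hStop⟩ := hmem
    obtain ⟨g, rfl⟩ := Finset.card_eq_one.mp hScard
    refine ⟨g, fun H _ => ?_⟩
    have : Subgroup.normalClosure ({g} : Set G) = ⊤ := by simpa using hStop
    have hsub : Subsingleton (G ⧸ Subgroup.normalClosure ({g} : Set G)) := by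
      rw [this]
      exact QuotientGroup.subsingleton_quotient_top
    ext x
    simp [Subsingleton.elim x 1, Subgroup.one_mem]
  · rintro ⟨-, h2⟩ g
    push_neg at h2
    obtain ⟨H, hHfi, hHne⟩ := h2 g
    set K := Subgroup.normalClosure ({g} : Set G) with hK
    set f := QuotientGroup.mk' K with hf
    have hsurj : Function.Surjective f := QuotientGroup.mk'_surjective K
    have hker : f.ker = K := QuotientGroup.ker_mk' K
    set N' := H.comap f with hN'
    have hN'fi : N'.FiniteIndex := ⟨by
      rw [hN', Subgroup.index_comap_of_surjective _ hsurj]; exact hHfi.index_ne_zero⟩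
    have hN'ne : N' ≠ ⊤ := by
      intro h
      apply hHne
      have := Subgroup.map_comap_eq_self_of_surjective hsurj H
      rw [← this, ← hN', h, Subgroup.map_top_of_surjective _ hsurj]
    refine ⟨N'.normalCore, Subgroup.normalCore_normal N', ?_, inferInstance, ?_⟩
    · intro h
      exact hN'ne (top_le_iff.mp (h ▸ N'.normalCore_le))
    · have hKN' : K ≤ N' := by rw [← hker]; exact Subgroup.ker_le_comap (f := f) H
      have : K ≤ N'.normalCore := Subgroup.normal_le_normalCore.mpr hKN'
      exact this (Subgroup.subset_normalClosure (by simp))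
end

section
/- Let G be a finitely generated group with no infinite simple quotients (i.e., there is no normal subgroup N of G such that G/N is infinite and simple). Then G is finitely annihilated if and only if the weight of G is strictly greater than 1. -/
/-- Existence of a maximal proper normal subgroup above a given proper normal
subgroup, in a finitely generated group. -/
theorem exists_maximal_normal_aux (G : Type*) [Group G] (hfg : Group.FG G)
    (N₀ : Subgroup G) (hn : N₀.Normal) (hne : N₀ ≠ ⊤) :
    ∃ M : Subgroup G, N₀ ≤ M ∧ Maximal (fun N : Subgroup G => N.Normal ∧ N ≠ ⊤) M := by
  obtain ⟨n, Sn, hScard, hSgen⟩ := Group.fg_iff'.mp hfg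
  refine zorn_le_nonempty₀ {N : Subgroup G | N.Normal ∧ N ≠ ⊤} ?_ N₀ ⟨hn, hne⟩
  intro c hcs hchain y hy
  refine ⟨sSup c, ⟨?_, ?_⟩, fun z hz => le_sSup hz⟩
  · -- sSup of a chain of normal subgroups is normal
    constructor
    intro x hx g
    have hdir : DirectedOn (· ≤ ·) c := hchain.directedOn
    rw [Subgroup.mem_sSup_of_directedOn ⟨y, hy⟩ hdir] at hx ⊢
    obtain ⟨N, hNc, hxN⟩ := hx
    exact ⟨N, hNc, (hcs hNc).1.conj_mem x hxN g⟩
  · -- sSup of the chain is proper, since G is finitely generated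
    intro htop
    have hdir : DirectedOn (· ≤ ·) c := hchain.directedOn
    have hsub : (Sn : Set G) ⊆ ⋃ N ∈ c, (N : Set G) := by
      intro s hs
      have : s ∈ sSup c := htop ▸ Subgroup.mem_top s
      rw [Subgroup.mem_sSup_of_directedOn ⟨y, hy⟩ hdir] at this
      obtain ⟨N, hNc, hsN⟩ := this
      exact Set.mem_biUnion hNc hsN
    have hdir' : DirectedOn (fun i j : Subgroup G => (i : Set G) ⊆ (j : Set G)) c := by
      intro a ha b hb
      obtain ⟨d, hd, had, hbd⟩ := hdir a ha b hb
      exact ⟨d, hd, had, hbd⟩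
    obtain ⟨N, hNc, hSN⟩ :=
      DirectedOn.exists_mem_subset_of_finset_subset_biUnion ⟨y, hy⟩ hdir' hsub
    have : Subgroup.closure (Sn : Set G) ≤ N := (Subgroup.closure_le N).mpr hSN
    rw [hSgen] at this
    exact (hcs hNc).2 (top_le_iff.mp this)

/-- If `M` is a maximal proper normal subgroup of `G`, then `G ⧸ M` is simple. -/
theorem quotient_simple_of_maximal_normal_aux (G : Type*) [Group G] {M : Subgroup G}
    (hmax : Maximal (fun N : Subgroup G => N.Normal ∧ N ≠ ⊤) M) :
    letI := hmax.prop.1; IsSimpleGroup (G ⧸ M) := by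
  letI := hmax.prop.1
  have hnt : Nontrivial (G ⧸ M) := by
    obtain ⟨x, hx⟩ : ∃ x : G, x ∉ M := by
      by_contra hc
      push_neg at hc
      exact hmax.prop.2 ((Subgroup.eq_top_iff' M).mpr hc)
    refine ⟨⟨(x : G ⧸ M), 1, ?_⟩⟩
    simpa only [ne_eq, QuotientGroup.eq_one_iff] using hx
  refine ⟨fun H hH => ?_⟩
  set φ := QuotientGroup.mk' M with hφ
  have hsurj : Function.Surjective φ := QuotientGroup.mk'_surjective M
  have hker : φ.ker = M := QuotientGroup.ker_mk' M
  have hKn : (H.comap φ).Normal := hH.comap φ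
  have hMK : M ≤ H.comap φ :=
    le_trans (le_of_eq hker.symm) (Subgroup.ker_le_comap φ H)
  rcases eq_or_ne (H.comap φ) ⊤ with h | h
  · right
    have : H.comap φ = Subgroup.comap φ ⊤ := by rw [h, Subgroup.comap_top]
    exact Subgroup.comap_injective hsurj this
  · left
    have hKM : H.comap φ = M := le_antisymm (hmax.le_of_ge ⟨hKn, h⟩ hMK) hMK
    have : H.comap φ = Subgroup.comap φ ⊥ := by
      rw [MonoidHom.comap_bot φ, hker, hKM]
    exact Subgroup.comap_injective hsurj this

/-- A finitely generated group with no infinite simple quotients is finitely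
annihilated iff its weight is strictly greater than `1`. -/
theorem finitelyAnnihilated_iff_one_lt_weight
    (G : Type*) [Group G] (hfg : Group.FG G)
    (hnosimple : ¬ ∃ N : Subgroup G, ∃ hN : N.Normal,
        Infinite (G ⧸ N) ∧ (letI := hN; IsSimpleGroup (G ⧸ N))) :
    FinitelyAnnihilated G ↔ 1 < weight G := by
  constructor
  · -- FA → weight > 1
    intro hFA
    have hne : {n : ℕ | ∃ S : Finset G, S.card = n ∧
        Subgroup.normalClosure (S : Set G) = ⊤}.Nonempty := by
      obtain ⟨n, Sn, hScard, hSgen⟩ := Group.fg_iff'.mp hfg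
      refine ⟨n, Sn, hScard, ?_⟩
      exact top_le_iff.mp (hSgen ▸ Subgroup.closure_le_normalClosure)
    have hmem : ∃ S : Finset G, S.card = weight G ∧
        Subgroup.normalClosure (S : Set G) = ⊤ := Nat.sInf_mem hne
    obtain ⟨S, hcard, hclos⟩ := hmem
    by_contra hw
    push_neg at hw
    have hcard1 : S.card ≤ 1 := hcard ▸ hw
    rcases Nat.le_one_iff_eq_zero_or_eq_one.mp hcard1 with h0 | h1
    · rw [Finset.card_eq_zero.mp h0] at hclos
      obtain ⟨N, hN, hNe, _, _⟩ := hFA 1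
      haveI := hN
      have : (⊤ : Subgroup G) ≤ N := by
        rw [← hclos]
        exact Subgroup.normalClosure_le_normal (by simp)
      exact hNe (top_le_iff.mp this)
    · obtain ⟨g, rfl⟩ := Finset.card_eq_one.mp h1
      simp only [Finset.coe_singleton] at hclos
      obtain ⟨N, hN, hNe, _, hg⟩ := hFA g
      haveI := hN
      have : Subgroup.normalClosure {g} ≤ N :=
        Subgroup.normalClosure_le_normal (Set.singleton_subset_iff.mpr hg)
      exact hNe (top_le_iff.mp (hclos ▸ this))
  · -- weight > 1 → FA
    intro hw g
    -- normalClosure {g} ≠ ⊤, otherwise weight ≤ 1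
    have hclos : Subgroup.normalClosure ({g} : Set G) ≠ ⊤ := by
      intro h
      have : (1 : ℕ) ∈ {n : ℕ | ∃ S : Finset G, S.card = n ∧
          Subgroup.normalClosure (S : Set G) = ⊤} := by
        refine ⟨{g}, Finset.card_singleton g, ?_⟩
        simpa using h
      have h1 : weight G ≤ 1 := Nat.sInf_le this
      omega
    obtain ⟨M, hle, hmax⟩ := exists_maximal_normal_aux G hfg
      (Subgroup.normalClosure ({g} : Set G)) (Subgroup.normalClosure_normal) hclos
    have hMn : M.Normal := hmax.prop.1
    have hsimple : letI := hMn; IsSimpleGroup (G ⧸ M) :=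
      quotient_simple_of_maximal_normal_aux G hmax
    -- G ⧸ M is not infinite, hence finite, hence M has finite index
    have hfin : ¬ Infinite (G ⧸ M) := fun hinf =>
      hnosimple ⟨M, hMn, hinf, hsimple⟩
    have : Finite (G ⧸ M) := not_infinite_iff_finite.mp hfin
    refine ⟨M, hMn, hmax.prop.2, (Subgroup.finiteIndex_of_finite_quotient : M.FiniteIndex), ?_⟩
    exact hle (Subgroup.subset_normalClosure (Set.mem_singleton g))
end

section
/- Let G be a nontrivial finitely generated group which is not finitely annihilated and whose weight is not equal to 1. Then G has an infinite simple quotient, i.e., there exists a normal subgroup N of G such that G/N is infinite and simple. -/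
/-- A finset contained in the union of a chain of subgroups lies in one member. -/
lemma finset_subset_chain_mem {G : Type*} [Group G] {c : Set (Subgroup G)}
    (hc : IsChain (· ≤ ·) c) {y : Subgroup G} (hy : y ∈ c) (T : Finset G)
    (h : ∀ t ∈ T, ∃ N ∈ c, t ∈ N) : ∃ N ∈ c, ∀ t ∈ T, t ∈ N := by
  classical
  induction T using Finset.induction_on with
  | empty => exact ⟨y, hy, by simp⟩
  | @insert a T ha ih =>
    obtain ⟨N, hNc, hN⟩ := ih (fun t ht => h t (Finset.mem_insert_of_mem ht))
    obtain ⟨M, hMc, hM⟩ := h a (Finset.mem_insert_self a T)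
    rcases hc.total hNc hMc with hle | hle
    · exact ⟨M, hMc, fun t ht => by
        rcases Finset.mem_insert.mp ht with rfl | ht
        · exact hM
        · exact hle (hN t ht)⟩
    · exact ⟨N, hNc, fun t ht => by
        rcases Finset.mem_insert.mp ht with rfl | ht
        · exact hle hM
        · exact hN t ht⟩

/-- A nontrivial finitely generated group which is neither finitely annihilated nor of
weight `1` has an infinite simple quotient. -/
theorem exists_infinite_simple_quotient
    (G : Type*) [Group G] [Nontrivial G] (hfg : Group.FG G)
    (hnfa : ¬ FinitelyAnnihilated G) (hw : weight G ≠ 1) :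
    ∃ N : Subgroup G, ∃ hN : N.Normal,
      Infinite (G ⧸ N) ∧ (letI := hN; IsSimpleGroup (G ⧸ N)) := by
  rw [FinitelyAnnihilated] at hnfa
  push_neg at hnfa
  obtain ⟨g, hg⟩ := hnfa
  -- the normal closure of g is proper, else weight = 1
  set H : Subgroup G := Subgroup.normalClosure {g} with hHdef
  have hHnormal : H.Normal := Subgroup.normalClosure_normal
  have hHtop : H ≠ ⊤ := by
    intro htop
    apply hw
    have h1 : (1 : ℕ) ∈ {n : ℕ | ∃ S : Finset G, S.card = n ∧
        Subgroup.normalClosure (S : Set G) = ⊤} := by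
      exact ⟨{g}, Finset.card_singleton g, by simpa using htop⟩
    have h0 : (0 : ℕ) ∉ {n : ℕ | ∃ S : Finset G, S.card = n ∧
        Subgroup.normalClosure (S : Set G) = ⊤} := by
      rintro ⟨S, hS, hcl⟩
      rw [Finset.card_eq_zero] at hS
      subst hS
      have : Subgroup.normalClosure ((∅ : Finset G) : Set G) ≤ ⊥ :=
        Subgroup.normalClosure_le_normal (by simp)
      rw [hcl, top_le_iff] at this
      exact absurd this.symm (by simpa using (Subgroup.nontrivial_iff_exists_ne_one (⊤ : Subgroup G)).mpr (by obtain ⟨x, hx⟩ := exists_ne (1 : G); exact ⟨x, Subgroup.mem_top x, hx⟩))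
    refine le_antisymm (Nat.sInf_le h1) ?_
    rcases Nat.eq_zero_or_pos (sInf {n : ℕ | ∃ S : Finset G, S.card = n ∧
        Subgroup.normalClosure (S : Set G) = ⊤}) with h | h
    · exact absurd (h ▸ Nat.sInf_mem ⟨1, h1⟩) h0
    · exact h
  have hgH : g ∈ H := Subgroup.subset_normalClosure (Set.mem_singleton g)
  -- Zorn's lemma: maximal proper normal subgroup containing g
  set S : Set (Subgroup G) := {N | N.Normal ∧ N ≠ ⊤ ∧ g ∈ N} with hSdef
  have hHS : H ∈ S := ⟨hHnormal, hHtop, hgH⟩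
  obtain ⟨T, hTgen⟩ := Group.fg_def.mp hfg
  obtain ⟨K, hHK, hKmax⟩ := zorn_le_nonempty₀ S (fun c hcS hc y hy => by
    refine ⟨sSup c, ⟨?_, ?_, ?_⟩, fun z hz => le_sSup hz⟩
    · constructor
      intro n hn x
      rw [Subgroup.mem_sSup_of_directedOn ⟨y, hy⟩ hc.directedOn] at hn ⊢
      obtain ⟨N, hNc, hnN⟩ := hn
      exact ⟨N, hNc, (hcS hNc).1.conj_mem n hnN x⟩
    · intro htop
      have hmem : ∀ t ∈ T, ∃ N ∈ c, t ∈ N := by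
        intro t _
        have : t ∈ sSup c := htop ▸ Subgroup.mem_top t
        rwa [Subgroup.mem_sSup_of_directedOn ⟨y, hy⟩ hc.directedOn] at this
      obtain ⟨N, hNc, hN⟩ := finset_subset_chain_mem hc hy T hmem
      refine (hcS hNc).2.1 ?_
      rw [← top_le_iff, ← hTgen]
      exact (Subgroup.closure_le N).mpr (fun t ht => hN t ht)
    · rw [Subgroup.mem_sSup_of_directedOn ⟨y, hy⟩ hc.directedOn]
      exact ⟨y, hy, (hcS hy).2.2⟩) H hHS
  obtain ⟨hKnormal, hKtop, hgK⟩ := hKmax.prop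
  -- K is not of finite index
  have hKfi : ¬ K.FiniteIndex := fun h => hg K hKnormal hKtop h hgK
  have hinf : Infinite (G ⧸ K) := by
    by_contra h
    rw [not_infinite_iff_finite] at h
    exact hKfi (@Subgroup.finiteIndex_of_finite_quotient G _ K h)
  refine ⟨K, hKnormal, hinf, ?_⟩
  -- simplicity of the quotient
  have hnontriv : Nontrivial (G ⧸ K) := by
    have : ∃ x : G, x ∉ K := by
      by_contra h
      push_neg at h
      exact hKtop ((Subgroup.eq_top_iff' K).mpr h)
    obtain ⟨x, hx⟩ := this
    exact ⟨⟨QuotientGroup.mk x, 1, fun h => hx ((QuotientGroup.eq_one_iff x).mp h)⟩⟩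
  refine ⟨fun N' hN' => ?_⟩
  set P : Subgroup G := N'.comap (QuotientGroup.mk' K) with hPdef
  have hPnormal : P.Normal := hN'.comap (QuotientGroup.mk' K)
  have hKP : K ≤ P := by
    intro x hx
    rw [Subgroup.mem_comap]
    have : QuotientGroup.mk' K x = 1 := (QuotientGroup.eq_one_iff x).mpr hx
    rw [this]
    exact N'.one_mem
  have hmapP : N' = P.map (QuotientGroup.mk' K) :=
    (Subgroup.map_comap_eq_self_of_surjective (QuotientGroup.mk'_surjective K) N').symm
  by_cases hPtop : P = ⊤
  · right
    rw [hmapP, hPtop]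
    exact Subgroup.map_top_of_surjective _ (QuotientGroup.mk'_surjective K)
  · left
    have hPS : P ∈ S := ⟨hPnormal, hPtop, hKP hgK⟩
    have hPK : P = K := le_antisymm (hKmax.2 hPS hKP) hKP
    rw [hmapP, Subgroup.map_eq_bot_iff, hPK, QuotientGroup.ker_mk']
end

section
/- Let G be a group and H a normal subgroup of G such that the quotient group G/H is finitely annihilated. Then G itself is finitely annihilated. -/
/-- If some quotient `G/H` of a group `G` is finitely annihilated, then so is `G`. -/
theorem finitelyAnnihilated_of_quotient
    (G : Type*) [Group G] (H : Subgroup G) [H.Normal]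
    (h : FinitelyAnnihilated (G ⧸ H)) :
    FinitelyAnnihilated G := by
  intro g
  obtain ⟨N, hN, hNtop, hNfi, hgN⟩ := h (QuotientGroup.mk g)
  refine ⟨N.comap (QuotientGroup.mk' H), hN.comap _, ?_, ?_, hgN⟩
  · intro htop
    apply hNtop
    rw [← top_le_iff]
    intro x _
    obtain ⟨y, rfl⟩ := QuotientGroup.mk'_surjective H x
    have : y ∈ N.comap (QuotientGroup.mk' H) := htop ▸ Subgroup.mem_top y
    exact this
  · constructor
    rw [Subgroup.index_comap_of_surjective _ (QuotientGroup.mk'_surjective H)]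
    exact hNfi.index_ne_zero
end

section
/- Let A be a finitely annihilated group and G any group. Then both the direct product A × G and the free product A ∗ G are finitely annihilated. -/
theorem FA_pullback {A H : Type*} [Group A] [Group H] (f : H →* A)
    (hf : Function.Surjective f) (hA : FinitelyAnnihilated A) :
    FinitelyAnnihilated H := by
  intro h
  obtain ⟨N, hN, hNtop, hNfi, hmem⟩ := hA (f h)
  refine ⟨N.comap f, hN.comap f, ?_, ?_, hmem⟩
  · intro htop
    apply hNtop
    rw [eq_top_iff]
    intro a _
    obtain ⟨b, rfl⟩ := hf a
    have : b ∈ N.comap f := htop ▸ Subgroup.mem_top b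
    exact this
  · constructor
    rw [Subgroup.index_comap_of_surjective _ hf]
    exact hNfi.index_ne_zero

/-- If `A` is finitely annihilated and `G` is any group then both the direct product
`A × G` and the free product `A ∗ G` are finitely annihilated. -/
theorem finitelyAnnihilated_prod_and_coprod
    (A G : Type*) [Group A] [Group G] (hA : FinitelyAnnihilated A) :
    FinitelyAnnihilated (A × G) ∧ FinitelyAnnihilated (Monoid.Coprod A G) := by
  constructor
  · exact FA_pullback (MonoidHom.fst A G) (fun a => ⟨(a, 1), rfl⟩) hA
  · exact FA_pullback Monoid.Coprod.fst
      (fun a => ⟨Monoid.Coprod.inl a, by simp⟩) hA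
end

section
/- Let X be a set. The free group F_X on X is finitely annihilated if and only if X has cardinality at least 2. -/
/-- The free group on a set `X` is finitely annihilated iff `X` has at least two
elements. -/
theorem freeGroup_finitelyAnnihilated_iff (X : Type*) :
    FinitelyAnnihilated (FreeGroup X) ↔ 2 ≤ Cardinal.mk X := by
  rw [Cardinal.two_le_iff]
  constructor
  · intro hFA
    by_contra h
    push_neg at h
    -- X is subsingleton
    have hsub : ∀ x y : X, x = y := h
    by_cases hne : Nonempty X
    · obtain ⟨x₀⟩ := hne
      obtain ⟨N, _, hNtop, _, hmem⟩ := hFA (FreeGroup.of x₀)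
      apply hNtop
      rw [eq_top_iff, ← FreeGroup.closure_range_of, Subgroup.closure_le]
      rintro _ ⟨x, rfl⟩
      rwa [hsub x x₀]
    · -- X is empty, FreeGroup X is trivial
      have hempty : IsEmpty X := not_nonempty_iff.mp hne
      have htriv : ∀ g : FreeGroup X, g = 1 := by
        intro g
        induction g using FreeGroup.induction_on with
        | C1 => rfl
        | of x => exact hempty.elim x
        | inv_of x _ => exact hempty.elim x
        | mul x y hx hy => rw [hx, hy, one_mul]
      obtain ⟨N, _, hNtop, _, _⟩ := hFA 1
      apply hNtop
      rw [eq_top_iff]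
      intro g _
      rw [htriv g]; exact N.one_mem
  · rintro ⟨x₀, x₁, hne⟩ g
    classical
    -- exponent sums at x₀ and x₁
    set ψ : FreeGroup X →* Multiplicative (ℤ × ℤ) :=
      FreeGroup.lift (fun x => Multiplicative.ofAdd
        (if x = x₀ then ((1 : ℤ), (0 : ℤ)) else if x = x₁ then (0, 1) else 0)) with hψ
    set A : ZMod 2 := ((Multiplicative.toAdd (ψ g)).1 : ZMod 2) with hA
    set B : ZMod 2 := ((Multiplicative.toAdd (ψ g)).2 : ZMod 2) with hB
    set c : ZMod 2 × ZMod 2 := if A = 0 then (1, 0) else (B, A) with hc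
    have key : A * c.1 + B * c.2 = 0 := by
      rw [hc]
      split_ifs with h
      · simp [h]
      · simp only
        rw [mul_comm B A, ← two_mul, show ((2 : ZMod 2)) = 0 from rfl, zero_mul]
    let χ : (ℤ × ℤ) →+ ZMod 2 := AddMonoidHom.mk'
      (fun p => (p.1 : ZMod 2) * c.1 + (p.2 : ZMod 2) * c.2)
      (by intro p q; simp only [Prod.fst_add, Prod.snd_add, Int.cast_add]; ring)
    let φ : FreeGroup X →* Multiplicative (ZMod 2) := χ.toMultiplicative.comp ψ
    refine ⟨φ.ker, MonoidHom.normal_ker φ, ?_, ?_, ?_⟩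
    · intro htop
      have hc1 : c.1 ≠ 0 ∨ c.2 ≠ 0 := by
        rw [hc]; split_ifs with h
        · left; exact one_ne_zero
        · right; exact h
      have hw : ∀ x : X, φ (FreeGroup.of x) = 1 := by
        intro x
        have : FreeGroup.of x ∈ φ.ker := htop ▸ Subgroup.mem_top _
        exact this
      have e0 : φ (FreeGroup.of x₀) = Multiplicative.ofAdd c.1 := by
        simp [φ, χ, hψ]
      have e1 : φ (FreeGroup.of x₁) = Multiplicative.ofAdd c.2 := by
        simp [φ, χ, hψ, Ne.symm hne]
      rcases hc1 with h | h
      · exact h (by simpa [e0] using hw x₀)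
      · exact h (by simpa [e1] using hw x₁)
    · haveI : Finite (Multiplicative (ZMod 2)) := by
        unfold Multiplicative; infer_instance
      exact Subgroup.finiteIndex_ker φ
    · show φ g = 1
      simp only [φ, MonoidHom.comp_apply, AddMonoidHom.toMultiplicative_apply_apply,
        AddMonoidHom.mk'_apply, χ]
      rw [← hA, ← hB, key]
      rfl
end

section
/- Let S be a group having no proper normal finite-index subgroups, and let G be a group of weight 1 (i.e., G is the normal closure of a single element). Then the free product G ∗ S is not finitely annihilated. -/
/-- The free product of a group `S` having no proper normal finite-index subgroups
with a group `G` of weight `1` is never finitely annihilated. -/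
theorem coprod_not_finitelyAnnihilated
    (S G : Type*) [Group S] [Group G]
    (hS : ∀ N : Subgroup S, N.Normal → N.FiniteIndex → N = ⊤)
    (hG : ∃ g : G, Subgroup.normalClosure ({g} : Set G) = ⊤) :
    ¬ FinitelyAnnihilated (Monoid.Coprod G S) := by
  obtain ⟨g, hg⟩ := hG
  intro hFA
  obtain ⟨N, hNnorm, hNne, hNfi, hgN⟩ := hFA (Monoid.Coprod.inl g)
  apply hNne
  -- comap inl N is normal, contains g, hence is ⊤ since normalClosure {g} = ⊤
  have hinl : (Monoid.Coprod.inl : G →* Monoid.Coprod G S).range ≤ N := by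
    have hcomap : N.comap (Monoid.Coprod.inl : G →* Monoid.Coprod G S) = ⊤ := by
      rw [← top_le_iff, ← hg]
      have := Subgroup.Normal.comap hNnorm (Monoid.Coprod.inl : G →* Monoid.Coprod G S)
      exact Subgroup.normalClosure_le_normal (by simpa [Set.singleton_subset_iff] using hgN)
    rintro x ⟨y, rfl⟩
    have : y ∈ N.comap (Monoid.Coprod.inl : G →* Monoid.Coprod G S) := by
      rw [hcomap]; trivial
    exact this
  -- comap inr N is normal of finite index, hence ⊤
  have hinr : (Monoid.Coprod.inr : S →* Monoid.Coprod G S).range ≤ N := by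
    have hfi : (N.comap (Monoid.Coprod.inr : S →* Monoid.Coprod G S)).FiniteIndex := by
      constructor
      rw [Subgroup.index_comap]
      exact fun h => hNfi.index_ne_zero
        (Nat.eq_zero_of_zero_dvd (h ▸ Subgroup.relIndex_dvd_index_of_normal N _))
    have hcomap : N.comap (Monoid.Coprod.inr : S →* Monoid.Coprod G S) = ⊤ :=
      hS _ (Subgroup.Normal.comap hNnorm _) hfi
    rintro x ⟨y, rfl⟩
    have : y ∈ N.comap (Monoid.Coprod.inr : S →* Monoid.Coprod G S) := by
      rw [hcomap]; trivial
    exact this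
  rw [← top_le_iff, ← Monoid.Coprod.range_inl_sup_range_inr (G := G) (H := S)]
  exact sup_le hinl hinr
end

section
/- Let G be a finitely generated abelian group. Then G is finitely annihilated if and only if G is non-cyclic. -/
open Subgroup CompleteLattice

/-- In a finitely generated group, the top subgroup is a compact element of the
subgroup lattice. -/
lemma FA.isCompactElement_top {G : Type*} [Group G] (hfg : Group.FG G) :
    IsCompactElement (⊤ : Subgroup G) := by
  rw [CompleteLattice.isCompactElement_iff_le_of_directed_sSup_le]
  intro s hne hdir hsup
  obtain ⟨S, hScl, hSfin⟩ := Group.fg_iff.mp hfg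
  have hmem : ∀ x : S, ∃ K ∈ s, (x : G) ∈ K := by
    rintro ⟨x, hx⟩
    have : x ∈ sSup s := hsup (Subgroup.mem_top x)
    exact (Subgroup.mem_sSup_of_directedOn hne hdir).mp this
  choose f hfs hfx using hmem
  have hT : (Set.range f).Finite := by
    haveI : Finite S := hSfin
    exact Set.finite_range f
  obtain ⟨K, hKs, hK⟩ := Finset.sup_le_of_le_directed s hne hdir hT.toFinset
    (fun x hx => ⟨x, by
      obtain ⟨y, rfl⟩ := hT.mem_toFinset.mp hx
      exact hfs y, le_rfl⟩)
  refine ⟨K, hKs, ?_⟩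
  rw [← hScl, Subgroup.closure_le]
  intro x hx
  have h1 : f ⟨x, hx⟩ ≤ hT.toFinset.sup id := by
    have : f ⟨x, hx⟩ ∈ hT.toFinset := hT.mem_toFinset.mpr ⟨⟨x, hx⟩, rfl⟩
    exact Finset.le_sup (f := id) this
  exact (h1.trans hK) (hfx ⟨x, hx⟩)

/-- A simple commutative group is finite. -/
lemma FA.finite_of_simple_comm (Q : Type*) [CommGroup Q] [IsSimpleGroup Q] : Finite Q := by
  obtain ⟨x, hx⟩ := exists_ne (1 : Q)
  have hxtop : Subgroup.zpowers x = ⊤ :=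
    ((zpowers x).normal_of_comm.eq_bot_or_eq_top).resolve_left (Subgroup.zpowers_ne_bot.2 hx)
  have hfin : IsOfFinOrder x := by
    rcases ((zpowers (x * x)).normal_of_comm.eq_bot_or_eq_top) with h | h
    · have hx2 : x * x = 1 := by
        have : x * x ∈ (⊥ : Subgroup Q) := h ▸ Subgroup.mem_zpowers _
        simpa using this
      exact isOfFinOrder_iff_zpow_eq_one.mpr ⟨2, by norm_num, by
        rw [zpow_two]; exact hx2⟩
    · have : x ∈ zpowers (x * x) := h ▸ Subgroup.mem_top x
      obtain ⟨k, hk⟩ := Subgroup.mem_zpowers_iff.mp this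
      refine isOfFinOrder_iff_zpow_eq_one.mpr ⟨2 * k - 1, ?_, ?_⟩
      · omega
      · have : (x * x) ^ k = x ^ (2 * k) := by
          rw [← zpow_two, ← zpow_mul]
        rw [zpow_sub, ← this, hk, zpow_one, mul_inv_cancel]
  have : Finite (zpowers x) := hfin.finite_zpowers
  rw [hxtop] at this
  exact Finite.of_equiv _ Subgroup.topEquiv.toEquiv

/-- The quotient by a coatom of the subgroup lattice of a commutative group is simple. -/
lemma FA.isSimpleGroup_quotient {G : Type*} [CommGroup G] {M : Subgroup G}
    (hM : IsCoatom M) : IsSimpleGroup (G ⧸ M) := by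
  have hnt : Nontrivial (G ⧸ M) := by
    obtain ⟨g, hg⟩ : ∃ g : G, g ∉ M := by
      by_contra h
      push_neg at h
      exact hM.1 (top_unique fun x _ => h x)
    exact ⟨(g : G ⧸ M), 1, fun h => hg ((QuotientGroup.eq_one_iff g).mp h)⟩
  refine ⟨fun K _ => ?_⟩
  set K' := K.comap (QuotientGroup.mk' M) with hK'
  have hMK' : M ≤ K' := fun m hm => by
    show QuotientGroup.mk' M m ∈ K
    rw [show QuotientGroup.mk' M m = 1 from (QuotientGroup.eq_one_iff m).mpr hm]
    exact K.one_mem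
  have hmap : K'.map (QuotientGroup.mk' M) = K :=
    Subgroup.map_comap_eq_self_of_surjective (QuotientGroup.mk'_surjective M) K
  rcases eq_or_lt_of_le hMK' with h | h
  · left
    rw [← hmap, ← h]
    ext q
    simp only [Subgroup.mem_map, Subgroup.mem_bot]
    constructor
    · rintro ⟨g, hg, rfl⟩
      exact (QuotientGroup.eq_one_iff g).mpr hg
    · rintro rfl
      exact ⟨1, M.one_mem, map_one _⟩
  · right
    rw [← hmap, hM.2 K' h]
    exact Subgroup.map_top_of_surjective _ (QuotientGroup.mk'_surjective M)



/-- A finitely generated abelian group is finitely annihilated iff it is non-cyclic. -/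
theorem finitelyAnnihilated_iff_not_isCyclic
    (G : Type*) [CommGroup G] (hfg : Group.FG G) :
    FinitelyAnnihilated G ↔ ¬ IsCyclic G := by

  constructor
  · rintro hFA ⟨g, hg⟩
    obtain ⟨N, -, hNtop, -, hgN⟩ := hFA g
    refine hNtop (top_unique fun x _ => ?_)
    obtain ⟨k, rfl⟩ := Subgroup.mem_zpowers_iff.mp (hg x)
    exact N.zpow_mem hgN k
  · intro hnc g
    have hz : Subgroup.zpowers g ≠ ⊤ := fun h => hnc ⟨g, fun x => show x ∈ Subgroup.zpowers g by rw [h]; trivial⟩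
    haveI : IsCoatomic (Subgroup G) :=
      CompleteLattice.coatomic_of_top_compact (FA.isCompactElement_top hfg)
    obtain ⟨M, hM, hgM⟩ :=
      (eq_top_or_exists_le_coatom (Subgroup.zpowers g)).resolve_left hz
    haveI := FA.isSimpleGroup_quotient hM
    haveI : Finite (G ⧸ M) := FA.finite_of_simple_comm _
    exact ⟨M, M.normal_of_comm, hM.1, M.finiteIndex_of_finite_quotient,
      hgM (Subgroup.mem_zpowers g)⟩
end

section
/- Let G be a nontrivial finitely generated solvable group. Then G is finitely annihilated if and only if the abelianisation G^ab is non-cyclic. -/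
/-- A simple `ℤ`-module is finite. -/
lemma FA.finite_of_isSimpleModule (S : Type*) [AddCommGroup S] [Module ℤ S]
    [IsSimpleModule ℤ S] : Finite S := by
  obtain ⟨I, hI, ⟨e⟩⟩ := isSimpleModule_iff_quot_maximal.mp ‹IsSimpleModule ℤ S›
  obtain ⟨a, ha⟩ := (IsPrincipalIdealRing.principal I).principal
  have ha0 : a ≠ 0 := by
    rintro rfl
    have hIbot : I = ⊥ := by rw [ha]; simp
    have h2 : (⊥ : Ideal ℤ) < Ideal.span {(2 : ℤ)} := by
      rw [bot_lt_iff_ne_bot, Ne, Ideal.span_singleton_eq_bot]; norm_num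
    have := hI.1.2 (Ideal.span {(2 : ℤ)}) (by rw [hIbot]; exact h2)
    rw [Ideal.span_singleton_eq_top, Int.isUnit_iff] at this
    omega
  haveI : NeZero a.natAbs := ⟨Int.natAbs_ne_zero.mpr ha0⟩
  have : Finite (ℤ ⧸ I) := by
    rw [ha]
    exact Finite.of_equiv _ (Int.quotientSpanEquivZMod a).toEquiv.symm
  exact Finite.of_equiv _ e.toEquiv.symm

/-- A nontrivial finitely generated commutative group has a proper finite-index subgroup. -/
lemma FA.exists_finiteIndex (B : Type*) [CommGroup B] [Group.FG B] [Nontrivial B] :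
    ∃ H : Subgroup B, H ≠ ⊤ ∧ H.FiniteIndex := by
  have hfg : Module.Finite ℤ (Additive B) := Module.Finite.iff_addGroup_fg.mpr inferInstance
  have hns : IsNoetherian ℤ (Additive B) := inferInstance
  have hco : IsCoatomic (Submodule ℤ (Additive B)) :=
    isCoatomic_of_orderTop_gt_wellFounded (isNoetherian_iff'.mp hns).wf
  rcases hco.eq_top_or_exists_le_coatom (⊥ : Submodule ℤ (Additive B)) with h | ⟨p, hp, -⟩
  · exact absurd h bot_ne_top
  · haveI hsimple : IsSimpleModule ℤ (Additive B ⧸ p) := isSimpleModule_iff_isCoatom.mpr hp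
    have hfin : Finite (Additive B ⧸ p) := FA.finite_of_isSimpleModule _
    have hfin' : Finite (Additive B ⧸ p.toAddSubgroup) := hfin
    haveI : p.toAddSubgroup.FiniteIndex := AddSubgroup.finiteIndex_of_finite_quotient
    refine ⟨Subgroup.toAddSubgroup.symm p.toAddSubgroup, ?_, ?_⟩
    · intro h
      apply hp.1
      have htop : p.toAddSubgroup = (⊤ : AddSubgroup (Additive B)) := by
        have := congrArg Subgroup.toAddSubgroup h
        simpa using this
      exact top_le_iff.mp (fun x _ => show x ∈ p.toAddSubgroup from htop ▸ AddSubgroup.mem_top x)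
    · constructor
      rw [← Subgroup.index_toAddSubgroup]
      simpa using (‹p.toAddSubgroup.FiniteIndex›).index_ne_zero

/-- In a finitely generated non-cyclic commutative group, every element lies in a proper
finite-index subgroup. -/
lemma FA.mem_finiteIndex {A : Type*} [CommGroup A] [Group.FG A] (hnc : ¬ IsCyclic A) (a : A) :
    ∃ K : Subgroup A, K ≠ ⊤ ∧ K.FiniteIndex ∧ a ∈ K := by
  set Z := Subgroup.zpowers a with hZ
  have hnt : Nontrivial (A ⧸ Z) := by
    by_contra h
    rw [not_nontrivial_iff_subsingleton] at h
    refine hnc ⟨⟨a, fun x => ?_⟩⟩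
    exact (QuotientGroup.eq_one_iff (N := Z) x).mp (Subsingleton.elim _ _)
  haveI : Group.FG (A ⧸ Z) := Group.fg_of_surjective (QuotientGroup.mk'_surjective Z)
  obtain ⟨H, hne, hfi⟩ := FA.exists_finiteIndex (A ⧸ Z)
  refine ⟨H.comap (QuotientGroup.mk' Z), ?_, ?_, ?_⟩
  · intro h
    apply hne
    rw [← Subgroup.map_comap_eq_self_of_surjective (QuotientGroup.mk'_surjective Z) H, h,
      Subgroup.map_top_of_surjective _ (QuotientGroup.mk'_surjective Z)]
  · constructor
    rw [H.index_comap_of_surjective (QuotientGroup.mk'_surjective Z)]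
    exact hfi.index_ne_zero
  · rw [Subgroup.mem_comap]
    have h1 : (QuotientGroup.mk' Z) a = 1 :=
      (QuotientGroup.eq_one_iff a).mpr (Subgroup.mem_zpowers a)
    rw [h1]; exact H.one_mem

/-- A solvable group whose commutator subgroup is everything is trivial. -/
lemma FA.subsingleton_of_commutator_eq_top {Q : Type*} [Group Q] [Group.IsSolvable Q]
    (h : commutator Q = ⊤) : Subsingleton Q := by
  obtain ⟨n, hn⟩ := Group.IsSolvable.solvable (G := Q)
  have hall : ∀ m, derivedSeries Q m = ⊤ := by
    intro m
    induction m with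
    | zero => exact derivedSeries_zero Q
    | succ k ih => rw [derivedSeries_succ, ih, ← commutator_def]; exact h
  have hbt : (⊥ : Subgroup Q) = ⊤ := by rw [← hn, hall n]
  constructor
  intro x y
  have hx : x ∈ (⊥ : Subgroup Q) := hbt ▸ Subgroup.mem_top x
  have hy : y ∈ (⊥ : Subgroup Q) := hbt ▸ Subgroup.mem_top y
  rw [Subgroup.mem_bot] at hx hy
  rw [hx, hy]

/-- A nontrivial finitely generated solvable group is finitely annihilated iff its
abelianisation is non-cyclic. -/
theorem solvable_finitelyAnnihilated_iff_abelianization_not_cyclic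
    (G : Type*) [Group G] [Nontrivial G] (hfg : Group.FG G) (hsolv : IsSolvable G) :
    FinitelyAnnihilated G ↔ ¬ IsCyclic (Abelianization G) := by
  have hofsurj : Function.Surjective (Abelianization.of (G := G)) := fun y =>
    QuotientGroup.induction_on y fun g => ⟨g, rfl⟩
  constructor
  · intro hFA hcyc
    obtain ⟨x, hx⟩ := hcyc.exists_generator
    obtain ⟨g, hg⟩ := hofsurj x
    obtain ⟨N, hNnorm, hNtop, hNfi, hgN⟩ := hFA g
    haveI := hNnorm
    -- the map G → Abelianization (G ⧸ N)
    set φ : G →* Abelianization (G ⧸ N) :=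
      (Abelianization.of).comp (QuotientGroup.mk' N) with hφ
    have hφsurj : Function.Surjective φ := by
      intro y
      obtain ⟨q, hq⟩ := (fun y => QuotientGroup.induction_on y fun g => ⟨g, rfl⟩ :
        Function.Surjective (Abelianization.of (G := G ⧸ N))) y
      obtain ⟨g', hg'⟩ := QuotientGroup.mk'_surjective N q
      exact ⟨g', by rw [hφ, MonoidHom.comp_apply, hg', hq]⟩
    set ψ : Abelianization G →* Abelianization (G ⧸ N) := Abelianization.lift φ with hψ
    have hψof : ∀ g' : G, ψ (Abelianization.of g') = φ g' := fun g' => rfl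
    have hψx : ψ x = 1 := by
      rw [← hg, hψof, hφ, MonoidHom.comp_apply]
      have : QuotientGroup.mk' N g = 1 := (QuotientGroup.eq_one_iff g).mpr hgN
      rw [this, map_one]
    have hsub : Subsingleton (Abelianization (G ⧸ N)) := by
      constructor
      have hone : ∀ y : Abelianization (G ⧸ N), y = 1 := by
        intro y
        obtain ⟨z, hz⟩ := by
          have : Function.Surjective ψ := by
            intro y
            obtain ⟨g', hg'⟩ := hφsurj y
            exact ⟨Abelianization.of g', by rw [hψof, hg']⟩
          exact this y
        obtain ⟨k, hk⟩ := hx z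
        rw [← hz, ← hk, map_zpow, hψx, one_zpow]
      intro a b; rw [hone a, hone b]
    have hcomm : commutator (G ⧸ N) = ⊤ := by
      rw [eq_top_iff]
      intro q _
      exact (QuotientGroup.eq_one_iff q).mp
        (Subsingleton.elim (α := Abelianization (G ⧸ N)) (Abelianization.of q) 1)
    haveI : Subsingleton (G ⧸ N) := @FA.subsingleton_of_commutator_eq_top _ _
      (by haveI : Group.IsSolvable G := hsolv; infer_instance) hcomm
    apply hNtop
    rw [eq_top_iff]
    intro g' _
    exact (QuotientGroup.eq_one_iff g').mp (Subsingleton.elim _ _)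
  · intro hnc g
    haveI : Group.FG (Abelianization G) := Group.fg_of_surjective hofsurj
    obtain ⟨K, hKtop, hKfi, hKmem⟩ := FA.mem_finiteIndex hnc (Abelianization.of g)
    refine ⟨K.comap Abelianization.of, (K.normal_of_comm).comap _, ?_, ?_, hKmem⟩
    · intro h
      apply hKtop
      rw [← Subgroup.map_comap_eq_self_of_surjective hofsurj K, h,
        Subgroup.map_top_of_surjective _ hofsurj]
    · constructor
      rw [K.index_comap_of_surjective hofsurj]
      exact hKfi.index_ne_zero
end

section
/- Let G be a finitely generated group having only finitely many distinct finite simple quotients (i.e., only finitely many isomorphism classes of finite simple groups occur as quotients G/N over normal subgroups N of G). Then G is finitely annihilated if and only if the abelianisation G^ab is non-cyclic. -/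
namespace FAProof

open Subgroup

variable {G : Type*} [Group G]

/-- Zorn's lemma: in a finitely generated group every proper normal subgroup is contained in
a maximal proper normal subgroup. -/
lemma exists_maximal_normal_ge (hfg : Group.FG G) {T : Subgroup G}
    (hTn : T.Normal) (hT : T ≠ ⊤) :
    ∃ B : Subgroup G, T ≤ B ∧ B.Normal ∧ B ≠ ⊤ ∧
      ∀ K : Subgroup G, K.Normal → B ≤ K → K ≠ ⊤ → K = B := by
  classical
  obtain ⟨n, S, -, hS⟩ := Group.fg_iff'.mp hfg
  set s : Set (Subgroup G) := {K | T ≤ K ∧ K.Normal ∧ K ≠ ⊤} with hs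
  have ih : ∀ c ⊆ s, IsChain (· ≤ ·) c → ∀ y ∈ c, ∃ ub ∈ s, ∀ z ∈ c, z ≤ ub := by
    intro c hcs hchain y hy
    have hcne : c.Nonempty := ⟨y, hy⟩
    have hdir : DirectedOn (· ≤ ·) c := hchain.directedOn
    have hmem : ∀ x : G, x ∈ sSup c ↔ ∃ H ∈ c, x ∈ H := fun x =>
      Subgroup.mem_sSup_of_directedOn hcne hdir
    refine ⟨sSup c, ⟨(hcs hy).1.trans (le_sSup hy), ⟨?_⟩, ?_⟩, fun z hz => le_sSup hz⟩
    · intro m hm g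
      rcases (hmem m).mp hm with ⟨Hc, hHc, hmH⟩
      exact (hmem _).mpr ⟨Hc, hHc, (hcs hHc).2.1.conj_mem m hmH g⟩
    · intro htop
      have hSsub : ∀ x ∈ S, ∃ H ∈ c, x ∈ H := fun x _ =>
        (hmem x).mp (htop ▸ Subgroup.mem_top x)
      have key : ∀ t : Finset G, (∀ x ∈ t, ∃ H ∈ c, x ∈ H) → ∃ H ∈ c, ∀ x ∈ t, x ∈ H := by
        intro t
        induction t using Finset.induction_on with
        | empty => exact fun _ => ⟨y, hy, by simp⟩
        | @insert a t' ha iht =>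
          intro hmem'
          obtain ⟨H₁, hH₁, hH₁t⟩ := iht fun x hx => hmem' x (Finset.mem_insert_of_mem hx)
          obtain ⟨H₂, hH₂, hH₂a⟩ := hmem' a (Finset.mem_insert_self a t')
          obtain ⟨H₃, hH₃, h13, h23⟩ := hdir H₁ hH₁ H₂ hH₂
          refine ⟨H₃, hH₃, fun x hx => ?_⟩
          rcases Finset.mem_insert.mp hx with rfl | hx'
          · exact h23 hH₂a
          · exact h13 (hH₁t x hx')
      obtain ⟨H, hHc, hHS⟩ := key S hSsub
      have htople : (⊤ : Subgroup G) ≤ H := by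
        rw [← hS]
        exact (Subgroup.closure_le H).mpr fun x hx => hHS x (Finset.mem_coe.mp hx)
      exact (hcs hHc).2.2 (top_le_iff.mp htople)
  obtain ⟨m, hTm, hm⟩ := zorn_le_nonempty₀ s ih T ⟨le_rfl, hTn, hT⟩
  exact ⟨m, hTm, hm.prop.2.1, hm.prop.2.2, fun K hKn hmK hKtop =>
    le_antisymm (hm.2 ⟨hTm.trans hmK, hKn, hKtop⟩ hmK) hmK⟩

/-- A "nice" subgroup: a maximal proper normal subgroup not containing the commutator
subgroup (i.e. with nonabelian simple quotient). -/
structure Nice (M : Subgroup G) : Prop where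
  normal : M.Normal
  ne_top : M ≠ ⊤
  max : ∀ K : Subgroup G, K.Normal → M ≤ K → K = M ∨ K = ⊤
  not_comm : ¬ commutator G ≤ M

variable {M M' M₀ : Subgroup G}

lemma Nice.comm_sup (hM : Nice M) : commutator G ⊔ M = ⊤ := by
  haveI := hM.normal
  rcases hM.max (commutator G ⊔ M) inferInstance le_sup_right with h | h
  · exact absurd (le_sup_left.trans h.le) hM.not_comm
  · exact h

lemma Nice.sup_eq_top_of_ne (hM : Nice M) (hM' : Nice M') (hne : M ≠ M') : M ⊔ M' = ⊤ := by
  haveI := hM.normal; haveI := hM'.normal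
  rcases hM.max (M ⊔ M') inferInstance le_sup_left with h | h
  · have hle : M' ≤ M := le_sup_right.trans h.le
    rcases hM'.max M hM.normal hle with h2 | h2
    · exact absurd h2 hne
    · exact absurd h2 hM.ne_top
  · exact h

lemma map_mk'_self (M : Subgroup G) [M.Normal] :
    Subgroup.map (QuotientGroup.mk' M) M = ⊥ := by
  rw [eq_bot_iff]
  rintro x ⟨m, hm, rfl⟩
  rw [Subgroup.mem_bot, QuotientGroup.mk'_apply]
  exact (QuotientGroup.eq_one_iff m).mpr hm

lemma Nice.isSimpleGroup (hM : Nice M) [M.Normal] : IsSimpleGroup (G ⧸ M) := by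
  obtain ⟨x, hx⟩ : ∃ x : G, x ∉ M := by
    by_contra h
    push_neg at h
    exact hM.ne_top ((Subgroup.eq_top_iff' M).mpr h)
  have hnt : Nontrivial (G ⧸ M) :=
    ⟨⟨(x : G ⧸ M), 1, fun h => hx ((QuotientGroup.eq_one_iff x).mp h)⟩⟩
  refine { toNontrivial := hnt, eq_bot_or_eq_top_of_normal := ?_ }
  intro R hR
  have hMK : M ≤ R.comap (QuotientGroup.mk' M) := by
    intro m hm
    rw [Subgroup.mem_comap, QuotientGroup.mk'_apply, (QuotientGroup.eq_one_iff m).mpr hm]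
    exact R.one_mem
  have hmapK : Subgroup.map (QuotientGroup.mk' M) (R.comap (QuotientGroup.mk' M)) = R :=
    Subgroup.map_comap_eq_self_of_surjective (QuotientGroup.mk'_surjective M) R
  rcases hM.max (R.comap (QuotientGroup.mk' M)) (hR.comap _) hMK with h | h
  · left; rw [← hmapK, h]; exact map_mk'_self M
  · right; rw [← hmapK, h]
    exact Subgroup.map_top_of_surjective _ (QuotientGroup.mk'_surjective M)

lemma Nice.inf_sup_eq_top (hM : Nice M) {A B : Subgroup G} (hA : A.Normal) (hB : B.Normal)
    (hAM : A ⊔ M = ⊤) (hBM : B ⊔ M = ⊤) : (A ⊓ B) ⊔ M = ⊤ := by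
  haveI := hM.normal; haveI := hA; haveI := hB
  set π := QuotientGroup.mk' M with hπ
  have hsurj := QuotientGroup.mk'_surjective M
  have hbot : Subgroup.map π M = ⊥ := map_mk'_self M
  have hmapA : Subgroup.map π A = ⊤ := by
    have h := congrArg (Subgroup.map π) hAM
    rwa [Subgroup.map_sup, hbot, sup_bot_eq, Subgroup.map_top_of_surjective _ hsurj] at h
  have hmapB : Subgroup.map π B = ⊤ := by
    have h := congrArg (Subgroup.map π) hBM
    rwa [Subgroup.map_sup, hbot, sup_bot_eq, Subgroup.map_top_of_surjective _ hsurj] at h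
  have hmapC : Subgroup.map π (commutator G) = ⊤ := by
    have h := congrArg (Subgroup.map π) hM.comm_sup
    rwa [Subgroup.map_sup, hbot, sup_bot_eq, Subgroup.map_top_of_surjective _ hsurj] at h
  have h1 : Subgroup.map π (A ⊓ B) = ⊤ := by
    rw [eq_top_iff]
    calc (⊤ : Subgroup (G ⧸ M)) = Subgroup.map π (commutator G) := hmapC.symm
      _ = ⁅Subgroup.map π ⊤, Subgroup.map π ⊤⁆ := by
          rw [commutator_def, Subgroup.map_commutator]
      _ = ⁅Subgroup.map π A, Subgroup.map π B⁆ := by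
          rw [hmapA, hmapB, Subgroup.map_top_of_surjective _ hsurj]
      _ = Subgroup.map π ⁅A, B⁆ := (Subgroup.map_commutator A B π).symm
      _ ≤ Subgroup.map π (A ⊓ B) := Subgroup.map_mono (Subgroup.commutator_le_inf A B)
  have hker : π.ker ≤ (A ⊓ B) ⊔ M := by
    rw [hπ, QuotientGroup.ker_mk']; exact le_sup_right
  have h2 := Subgroup.comap_map_eq π ((A ⊓ B) ⊔ M)
  rw [Subgroup.map_sup, hbot, sup_bot_eq, h1, Subgroup.comap_top, sup_eq_left.mpr hker] at h2
  exact h2.symm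

lemma biInf_normal (t : Finset (Subgroup G)) (h : ∀ M ∈ t, M.Normal) :
    (⨅ M ∈ t, M).Normal := by
  constructor
  intro n hn g
  simp only [Subgroup.mem_iInf] at hn ⊢
  intro M hM
  exact (h M hM).conj_mem n (hn M hM) g

lemma Nice.biInf_sup_eq_top (hM₀ : Nice M₀) :
    ∀ t : Finset (Subgroup G), (∀ M ∈ t, Nice M) → M₀ ∉ t → (⨅ M ∈ t, M) ⊔ M₀ = ⊤ := by
  classical
  intro t
  induction t using Finset.induction_on with
  | empty => intro _ _; simp
  | @insert M₁ t' hM₁ ih =>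
    intro ht hM₀t
    rw [Finset.iInf_insert]
    exact hM₀.inf_sup_eq_top ((ht M₁ (Finset.mem_insert_self _ _)).normal)
      (biInf_normal t' fun M hM => (ht M (Finset.mem_insert_of_mem hM)).normal)
      ((ht M₁ (Finset.mem_insert_self _ _)).sup_eq_top_of_ne hM₀
        (fun h => hM₀t (by rw [← h]; exact Finset.mem_insert_self _ _)))
      (ih (fun M hM => ht M (Finset.mem_insert_of_mem hM))
        (fun h => hM₀t (Finset.mem_insert_of_mem h)))

/-- The main avoidance induction: any coset of the commutator subgroup contains an element
avoiding any given finite collection of nice subgroups. -/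
lemma avoid : ∀ t : Finset (Subgroup G), (∀ M ∈ t, Nice M) → ∀ g₀ : G,
    ∃ c ∈ commutator G, ∀ M ∈ t, g₀ * c ∉ M := by
  classical
  intro t
  induction t using Finset.induction_on with
  | empty => intro _ g₀; exact ⟨1, one_mem _, by simp⟩
  | @insert M₀ t' hM₀t ih =>
    intro ht g₀
    have hM₀ : Nice M₀ := ht M₀ (Finset.mem_insert_self _ _)
    have ht' : ∀ M ∈ t', Nice M := fun M hM => ht M (Finset.mem_insert_of_mem hM)
    obtain ⟨c, hcC, hc⟩ := ih ht' g₀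
    by_cases hg : g₀ * c ∈ M₀
    · have hinf : ¬ (commutator G ⊓ (⨅ M ∈ t', M) ≤ M₀) := by
        intro hle
        have h2 : (commutator G ⊓ ⨅ M ∈ t', M) ⊔ M₀ = ⊤ :=
          hM₀.inf_sup_eq_top inferInstance
            (biInf_normal t' fun M hM => (ht' M hM).normal)
            hM₀.comm_sup (hM₀.biInf_sup_eq_top t' ht' hM₀t)
        rw [sup_eq_right.mpr hle] at h2
        exact hM₀.ne_top h2
      obtain ⟨c', hc'mem, hc'M₀⟩ := SetLike.not_le_iff_exists.mp hinf
      obtain ⟨hc'C, hc'N⟩ := Subgroup.mem_inf.mp hc'mem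
      refine ⟨c * c', mul_mem hcC hc'C, fun M hM => ?_⟩
      rcases Finset.mem_insert.mp hM with rfl | hM'
      · intro hmem
        rw [← mul_assoc] at hmem
        exact hc'M₀ ((M.mul_mem_cancel_left hg).mp hmem)
      · intro hmem
        rw [← mul_assoc] at hmem
        have hc'M : c' ∈ M := by
          simp only [Subgroup.mem_iInf] at hc'N
          exact hc'N M hM'
        exact hc M hM' ((M.mul_mem_cancel_right hc'M).mp hmem)
    · refine ⟨c, hcC, fun M hM => ?_⟩
      rcases Finset.mem_insert.mp hM with rfl | hM'
      · exact hg
      · exact hc M hM'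

lemma finite_monoidHom (hfg : Group.FG G) (H : Type*) [Group H] [Finite H] :
    Finite (G →* H) := by
  classical
  obtain ⟨n, S, -, hS⟩ := Group.fg_iff'.mp hfg
  have hinj : Function.Injective (fun f : G →* H => fun x : (S : Set G) => f x) := by
    intro f g h
    refine MonoidHom.eq_of_eqOn_dense hS fun x hx => ?_
    exact congrFun h ⟨x, hx⟩
  exact Finite.of_injective _ hinj

/-- The set of finite-index kernels of surjections onto a fixed group `H`. -/
def kerSet (G : Type*) [Group G] (H : Type*) [Group H] : Set (Subgroup G) :=
  {M | M.FiniteIndex ∧ ∃ f : G →* H, Function.Surjective f ∧ M = f.ker}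

lemma kerSet_finite (hfg : Group.FG G) (H : Type*) [Group H] : (kerSet G H).Finite := by
  classical
  rcases Set.eq_empty_or_nonempty (kerSet G H) with h | ⟨M₀, hM₀⟩
  · rw [h]; exact Set.finite_empty
  · obtain ⟨hM₀fi, f₀, hf₀s, hf₀k⟩ := hM₀
    haveI : f₀.ker.FiniteIndex := hf₀k ▸ hM₀fi
    haveI : Finite (G ⧸ f₀.ker) := inferInstance
    haveI : Finite H :=
      Finite.of_equiv _ (QuotientGroup.quotientKerEquivOfSurjective f₀ hf₀s).toEquiv
    haveI : Finite (G →* H) := finite_monoidHom hfg H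
    have hchoice : ∀ M : kerSet G H, ∃ f : G →* H, M.1 = f.ker :=
      fun M => M.2.2.imp fun f hf => hf.2
    choose F hF using hchoice
    have hinj : Function.Injective F := fun M M' h => Subtype.ext (by rw [hF M, hF M', h])
    exact Set.finite_coe_iff.mp (Finite.of_injective F hinj)


lemma nice_finite (hfg : Group.FG G) {k : ℕ} (H : Fin k → Type) (instH : ∀ i, Group (H i))
    (hsq : ∀ (N : Subgroup G) (hN : N.Normal),
        letI := hN
        Finite (G ⧸ N) → IsSimpleGroup (G ⧸ N) →
          ∃ i, letI := instH i; Nonempty ((G ⧸ N) ≃* H i)) :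
    {M : Subgroup G | Nice M ∧ M.FiniteIndex}.Finite := by
  classical
  have hsub : {M : Subgroup G | Nice M ∧ M.FiniteIndex} ⊆
      ⋃ i : Fin k, (letI := instH i; kerSet G (H i)) := by
    rintro M ⟨hMn, hMfi⟩
    haveI := hMn.normal
    haveI := hMfi
    haveI : Finite (G ⧸ M) := inferInstance
    obtain ⟨i, hne⟩ := hsq M hMn.normal inferInstance hMn.isSimpleGroup
    letI := instH i
    obtain ⟨e⟩ := hne
    refine Set.mem_iUnion.mpr ⟨i, ?_⟩
    show M.FiniteIndex ∧ ∃ f : G →* H i, Function.Surjective f ∧ M = f.ker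
    refine ⟨hMfi, e.toMonoidHom.comp (QuotientGroup.mk' M), ?_, ?_⟩
    · exact e.surjective.comp (QuotientGroup.mk'_surjective M)
    · rw [← MonoidHom.comap_ker]
      have hek : e.toMonoidHom.ker = ⊥ := by
        rw [MonoidHom.ker_eq_bot_iff]; exact e.injective
      rw [hek, MonoidHom.comap_bot, QuotientGroup.ker_mk']
  refine Set.Finite.subset (Set.finite_iUnion fun i => ?_) hsub
  letI := instH i
  exact kerSet_finite hfg (H i)

lemma of_eq_one_iff (x : G) :
    Abelianization.of x = 1 ↔ x ∈ commutator G :=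
  QuotientGroup.eq_one_iff x

lemma of_surjective : Function.Surjective (Abelianization.of : G →* Abelianization G) :=
  fun y => QuotientGroup.mk_surjective y

lemma forward (hfg : Group.FG G) {k : ℕ} (H : Fin k → Type) (instH : ∀ i, Group (H i))
    (hsq : ∀ (N : Subgroup G) (hN : N.Normal),
        letI := hN
        Finite (G ⧸ N) → IsSimpleGroup (G ⧸ N) →
          ∃ i, letI := instH i; Nonempty ((G ⧸ N) ≃* H i))
    (hcyc : IsCyclic (Abelianization G)) (hFA : FinitelyAnnihilated G) : False := by
  classical
  obtain ⟨x, hx⟩ := hcyc.exists_generator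
  obtain ⟨g₀, hg₀⟩ := of_surjective x
  obtain ⟨c, hcC, hc⟩ := avoid (nice_finite hfg H instH hsq).toFinset
    (fun M hM => ((nice_finite hfg H instH hsq).mem_toFinset.mp hM).1) g₀
  obtain ⟨N, hNn, hNtop, hNfi, hgN⟩ := hFA (g₀ * c)
  obtain ⟨B, hNB, hBn, hBtop, hBmax⟩ := exists_maximal_normal_ge hfg hNn hNtop
  haveI := hNfi
  have hBfi : B.FiniteIndex := Subgroup.finiteIndex_of_le hNB
  have hgB : g₀ * c ∈ B := hNB hgN
  by_cases hCB : commutator G ≤ B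
  · apply hBtop
    rw [Subgroup.eq_top_iff']
    intro y
    have h1 : Abelianization.of (g₀ * c) = x := by
      rw [map_mul, (of_eq_one_iff c).mpr hcC, mul_one, hg₀]
    obtain ⟨n, hn⟩ := hx (Abelianization.of y)
    have h2 : Abelianization.of (y * (g₀ * c) ^ (-n)) = 1 := by
      rw [map_mul, map_zpow, h1, ← hn, ← zpow_add, add_neg_cancel, zpow_zero]
    have h3 : y * (g₀ * c) ^ (-n) ∈ commutator G := (of_eq_one_iff _).mp h2
    have h4 : y = (y * (g₀ * c) ^ (-n)) * (g₀ * c) ^ n := by group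
    rw [h4]
    exact B.mul_mem (hCB h3) (B.zpow_mem hgB n)
  · have hBnice : Nice B :=
      ⟨hBn, hBtop, fun K hK hBK => (em (K = ⊤)).elim Or.inr
        (fun h => Or.inl (hBmax K hK hBK h)), hCB⟩
    exact hc B ((nice_finite hfg H instH hsq).mem_toFinset.mpr ⟨hBnice, hBfi⟩) hgB

lemma backward (hfg : Group.FG G) (hnc : ¬ IsCyclic (Abelianization G)) :
    FinitelyAnnihilated G := by
  intro g
  haveI := hfg
  have hsurj : Function.Surjective (Abelianization.of : G →* Abelianization G) := of_surjective
  haveI hfgA : Group.FG (Abelianization G) := Group.fg_of_surjective hsurj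
  set a := Abelianization.of g with ha
  have hT : Subgroup.zpowers a ≠ ⊤ := by
    intro h
    refine hnc ⟨⟨a, fun y => ?_⟩⟩
    have hy : y ∈ (⊤ : Subgroup (Abelianization G)) := Subgroup.mem_top y
    rwa [← h] at hy
  obtain ⟨B, hTB, hBn, hBtop, hBmax⟩ :=
    exists_maximal_normal_ge hfgA (Subgroup.zpowers a).normal_of_comm hT
  -- every subgroup of the quotient is trivial
  have hQsub : ∀ R : Subgroup (Abelianization G ⧸ B), R = ⊥ ∨ R = ⊤ := by
    intro R
    have hMK : B ≤ R.comap (QuotientGroup.mk' B) := by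
      intro m hm
      rw [Subgroup.mem_comap, QuotientGroup.mk'_apply, (QuotientGroup.eq_one_iff m).mpr hm]
      exact R.one_mem
    have hmapK : Subgroup.map (QuotientGroup.mk' B) (R.comap (QuotientGroup.mk' B)) = R :=
      Subgroup.map_comap_eq_self_of_surjective (QuotientGroup.mk'_surjective B) R
    by_cases hK : R.comap (QuotientGroup.mk' B) = ⊤
    · right; rw [← hmapK, hK]
      exact Subgroup.map_top_of_surjective _ (QuotientGroup.mk'_surjective B)
    · left
      have hKB := hBmax (R.comap (QuotientGroup.mk' B)) (Subgroup.normal_of_comm _)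
        hMK hK
      rw [← hmapK, hKB]
      exact map_mk'_self B
  -- the quotient is nontrivial
  have hnt : Nontrivial (Abelianization G ⧸ B) := by
    obtain ⟨z, hz⟩ : ∃ z : Abelianization G, z ∉ B := by
      by_contra h
      push_neg at h
      exact hBtop ((Subgroup.eq_top_iff' B).mpr h)
    exact ⟨⟨(z : Abelianization G ⧸ B), 1, fun h => hz ((QuotientGroup.eq_one_iff z).mp h)⟩⟩
  -- the quotient is finite
  obtain ⟨x, hx1⟩ := exists_ne (1 : Abelianization G ⧸ B)
  have hxtop : Subgroup.zpowers x = ⊤ :=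
    (hQsub _).resolve_left fun h => hx1 (Subgroup.zpowers_eq_bot.mp h)
  have hfo : IsOfFinOrder x := by
    rcases hQsub (Subgroup.zpowers (x * x)) with hb | ht
    · have hxx : x * x = 1 := Subgroup.zpowers_eq_bot.mp hb
      exact isOfFinOrder_iff_pow_eq_one.mpr ⟨2, two_pos, by rwa [pow_two]⟩
    · have hxmem : x ∈ Subgroup.zpowers (x * x) := by rw [ht]; exact Subgroup.mem_top x
      obtain ⟨m, hm⟩ := Subgroup.mem_zpowers_iff.mp hxmem
      refine isOfFinOrder_iff_zpow_eq_one.mpr ⟨2 * m - 1, ?_, ?_⟩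
      · omega
      · have h2 : x ^ (2 * m : ℤ) = x := by
          rw [zpow_mul]
          rw [show ((2:ℤ)) = ((2:ℕ):ℤ) by norm_num, zpow_natCast, pow_two]
          exact hm
        rw [zpow_sub, h2, zpow_one, mul_inv_cancel]
  have hfin : Finite (Abelianization G ⧸ B) := by
    have hfs : (Subgroup.zpowers x : Set (Abelianization G ⧸ B)).Finite :=
      finite_zpowers.mpr hfo
    rw [hxtop] at hfs
    rw [Subgroup.coe_top] at hfs
    exact Set.finite_univ_iff.mp hfs
  haveI := hfin
  haveI : B.FiniteIndex := Subgroup.finiteIndex_of_finite_quotient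
  refine ⟨B.comap Abelianization.of, hBn.comap _, ?_, ?_, ?_⟩
  · intro h
    apply hBtop
    have := Subgroup.map_comap_eq_self_of_surjective hsurj B
    rw [← this, h]
    exact Subgroup.map_top_of_surjective _ hsurj
  · refine ⟨?_⟩
    rw [Subgroup.index_comap_of_surjective B hsurj]
    exact Subgroup.FiniteIndex.index_ne_zero
  · exact hTB (Subgroup.mem_zpowers a)

end FAProof


/-- A finitely generated group with only finitely many distinct (isomorphism classes of)
finite simple quotients is finitely annihilated iff its abelianisation is non-cyclic. -/
theorem finitelyAnnihilated_iff_abelianization_not_cyclic_of_finitely_many_finite_simple_quotients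
    (G : Type*) [Group G] (hfg : Group.FG G)
    (hfin : ∃ (k : ℕ) (H : Fin k → Type) (instH : ∀ i, Group (H i)),
      ∀ (N : Subgroup G) (hN : N.Normal),
        letI := hN
        Finite (G ⧸ N) → IsSimpleGroup (G ⧸ N) →
          ∃ i, letI := instH i; Nonempty ((G ⧸ N) ≃* H i)) :
    FinitelyAnnihilated G ↔ ¬ IsCyclic (Abelianization G) := by
  constructor
  · intro hFA hcyc
    obtain ⟨k, H, instH, hsq⟩ := hfin
    exact FAProof.forward hfg H instH hsq hcyc hFA
  · exact FAProof.backward hfg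
end

section
/- Let m and n be coprime positive integers with mn > 1. Then the free product C_m ∗ C_n of the cyclic groups of orders m and n has weight 1, i.e., it is the normal closure of a single element (indeed of the element a b^{-1}, where a and b generate the two free factors). Consequently, C_m ∗ C_n is not finitely annihilated. -/
open Monoid.Coprod Multiplicative in
/-- Auxiliary: the normal closure of `a * b⁻¹` is everything. -/
theorem aux_normalClosure_top (m n : ℕ) (hm : 0 < m) (hn : 0 < n)
    (hco : Nat.Coprime m n) :
    Subgroup.normalClosure
      ({Monoid.Coprod.inl (Multiplicative.ofAdd (1 : ZMod m)) *
          (Monoid.Coprod.inr (Multiplicative.ofAdd (1 : ZMod n)))⁻¹} :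
        Set (Monoid.Coprod (Multiplicative (ZMod m)) (Multiplicative (ZMod n)))) = ⊤ := by
  haveI : NeZero m := ⟨hm.ne'⟩
  haveI : NeZero n := ⟨hn.ne'⟩
  set G := Monoid.Coprod (Multiplicative (ZMod m)) (Multiplicative (ZMod n))
  set g : G := inl (ofAdd (1 : ZMod m)) * (inr (ofAdd (1 : ZMod n)))⁻¹ with hgdef
  set N := Subgroup.normalClosure ({g} : Set G) with hN
  haveI : N.Normal := Subgroup.normalClosure_normal
  set φ := QuotientGroup.mk' N with hφ
  have hker : ∀ x : G, φ x = 1 ↔ x ∈ N := fun x => QuotientGroup.eq_one_iff x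
  have hgN : g ∈ N := Subgroup.subset_normalClosure (Set.mem_singleton g)
  have hab : φ (inl (ofAdd (1 : ZMod m))) = φ (inr (ofAdd (1 : ZMod n))) := by
    have := (hker g).2 hgN
    rw [hgdef, map_mul, map_inv, mul_inv_eq_one] at this
    exact this
  set c := φ (inl (ofAdd (1 : ZMod m))) with hc
  have hcm : c ^ m = 1 := by
    rw [hc, ← map_pow, ← map_pow, ← ofAdd_nsmul, nsmul_eq_mul, mul_one,
      ZMod.natCast_self, ofAdd_zero, map_one, map_one]
  have hcn : c ^ n = 1 := by
    rw [hab, ← map_pow, ← map_pow, ← ofAdd_nsmul, nsmul_eq_mul, mul_one,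
      ZMod.natCast_self, ofAdd_zero, map_one, map_one]
  have hc1 : c = 1 := by
    have h1 : orderOf c ∣ Nat.gcd m n :=
      Nat.dvd_gcd (orderOf_dvd_of_pow_eq_one hcm) (orderOf_dvd_of_pow_eq_one hcn)
    rw [hco] at h1
    exact orderOf_eq_one_iff.1 (Nat.dvd_one.1 h1)
  have hinl : ∀ x : Multiplicative (ZMod m), φ (inl x) = 1 := by
    intro x
    have hx : x = (ofAdd (1 : ZMod m)) ^ (toAdd x).val := by
      rw [← ofAdd_nsmul, nsmul_eq_mul, mul_one, ZMod.natCast_val, ZMod.cast_id, ofAdd_toAdd]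
    rw [hx, map_pow, map_pow, ← hc, hc1, one_pow]
  have hinr : ∀ x : Multiplicative (ZMod n), φ (inr x) = 1 := by
    intro x
    have hx : x = (ofAdd (1 : ZMod n)) ^ (toAdd x).val := by
      rw [← ofAdd_nsmul, nsmul_eq_mul, mul_one, ZMod.natCast_val, ZMod.cast_id, ofAdd_toAdd]
    rw [hx, map_pow, map_pow, ← hab, hc1, one_pow]
  rw [Subgroup.eq_top_iff']
  intro x
  rw [← hker]
  induction x using Monoid.Coprod.induction_on with
  | inl x => exact hinl x
  | inr x => exact hinr x
  | mul x y hx hy => rw [map_mul, hx, hy, mul_one]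

/-- For coprime positive integers `m, n` with `m * n > 1`, the free product
`C_m ∗ C_n` has weight `1`: it is the normal closure of the single element `a * b⁻¹`
(where `a, b` generate the two free factors); consequently it is not finitely
annihilated. -/
theorem coprod_cyclic_weight_one (m n : ℕ) (hm : 0 < m) (hn : 0 < n)
    (hco : Nat.Coprime m n) (hmn : 1 < m * n) :
    weight (Monoid.Coprod (Multiplicative (ZMod m)) (Multiplicative (ZMod n))) = 1 ∧
    Subgroup.normalClosure
      ({Monoid.Coprod.inl (Multiplicative.ofAdd (1 : ZMod m)) *
          (Monoid.Coprod.inr (Multiplicative.ofAdd (1 : ZMod n)))⁻¹} :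
        Set (Monoid.Coprod (Multiplicative (ZMod m)) (Multiplicative (ZMod n)))) = ⊤ ∧
    ¬ FinitelyAnnihilated
        (Monoid.Coprod (Multiplicative (ZMod m)) (Multiplicative (ZMod n))) := by
  set G := Monoid.Coprod (Multiplicative (ZMod m)) (Multiplicative (ZMod n)) with hG
  set g : G := Monoid.Coprod.inl (Multiplicative.ofAdd (1 : ZMod m)) *
      (Monoid.Coprod.inr (Multiplicative.ofAdd (1 : ZMod n)))⁻¹ with hgdef
  have htop : Subgroup.normalClosure ({g} : Set G) = ⊤ :=
    aux_normalClosure_top m n hm hn hco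
  -- `G` is nontrivial
  haveI hnt : Nontrivial G := by
    rcases Nat.lt_or_ge 1 m with h1 | h1
    · haveI : Fact (1 < m) := ⟨h1⟩
      obtain ⟨x, y, hxy⟩ := exists_pair_ne (Multiplicative (ZMod m))
      exact ⟨Monoid.Coprod.inl x, Monoid.Coprod.inl y,
        fun h => hxy (Monoid.Coprod.inl_injective h)⟩
    · have h2 : 1 < n := by
        rcases Nat.lt_or_ge 1 n with h | h
        · exact h
        · have hm1 : m = 1 := le_antisymm h1 hm
          have hn1 : n = 1 := le_antisymm h hn
          rw [hm1, hn1] at hmn; omega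
      haveI : Fact (1 < n) := ⟨h2⟩
      obtain ⟨x, y, hxy⟩ := exists_pair_ne (Multiplicative (ZMod n))
      exact ⟨Monoid.Coprod.inr x, Monoid.Coprod.inr y,
        fun h => hxy (Monoid.Coprod.inr_injective h)⟩
  have h1mem : 1 ∈ {k : ℕ | ∃ S : Finset G, S.card = k ∧
      Subgroup.normalClosure (S : Set G) = ⊤} :=
    ⟨{g}, Finset.card_singleton g, by simpa using htop⟩
  have h0mem : 0 ∉ {k : ℕ | ∃ S : Finset G, S.card = k ∧
      Subgroup.normalClosure (S : Set G) = ⊤} := by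
    rintro ⟨S, hcard, hcl⟩
    rw [Finset.card_eq_zero] at hcard
    subst hcard
    simp only [Finset.coe_empty] at hcl
    have hle : Subgroup.normalClosure (∅ : Set G) ≤ ⊥ :=
      Subgroup.normalClosure_le_normal (by simp)
    rw [hcl] at hle
    exact (bot_ne_top (α := Subgroup G)).symm (le_antisymm le_top hle).symm
  refine ⟨?_, htop, ?_⟩
  · refine le_antisymm (Nat.sInf_le h1mem) ?_
    refine Nat.one_le_iff_ne_zero.2 fun h => h0mem ?_
    rw [← h]
    exact Nat.sInf_mem ⟨1, h1mem⟩
  · intro hFA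
    obtain ⟨N', hnorm, hne, _, hgN'⟩ := hFA g
    haveI := hnorm
    have hle : Subgroup.normalClosure ({g} : Set G) ≤ N' :=
      Subgroup.normalClosure_le_normal (by simpa using hgN')
    rw [htop] at hle
    exact hne (le_antisymm le_top hle)
end

section
/- Let G be a group generated by two elements a and b, where a and b have finite orders m and n respectively with m and n coprime. Then G is not finitely annihilated. -/
/-- A group generated by two elements of finite coprime orders is not finitely
annihilated. -/
theorem not_finitelyAnnihilated_of_two_generators_coprime_orders
    (G : Type*) [Group G] (a b : G) (m n : ℕ) (hm : 0 < m) (hn : 0 < n)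
    (ha : orderOf a = m) (hb : orderOf b = n) (hco : Nat.Coprime m n)
    (hgen : Subgroup.closure ({a, b} : Set G) = ⊤) :
    ¬ FinitelyAnnihilated G := by
  intro hFA
  obtain ⟨N, hNorm, hNtop, _, hab⟩ := hFA (a * b)
  apply hNtop
  let φ := QuotientGroup.mk' N
  have hab1 : φ (a * b) = 1 := (QuotientGroup.eq_one_iff _).2 hab
  have hinv : φ a = (φ b)⁻¹ := by
    have := hab1
    rw [map_mul] at this
    exact eq_inv_of_mul_eq_one_left this
  have h1 : orderOf (φ a) ∣ m := ha ▸ orderOf_map_dvd φ a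
  have h2 : orderOf (φ a) ∣ n := by
    rw [hinv, orderOf_inv]
    exact hb ▸ orderOf_map_dvd φ b
  have h3 : orderOf (φ a) = 1 := Nat.eq_one_of_dvd_coprimes hco h1 h2
  have hA : a ∈ N := (QuotientGroup.eq_one_iff _).1 (orderOf_eq_one_iff.1 h3)
  have hB : b ∈ N := by
    have : φ b = 1 := by
      have := orderOf_eq_one_iff.1 h3
      rw [hinv, inv_eq_one] at this
      exact this
    exact (QuotientGroup.eq_one_iff _).1 this
  have hle : Subgroup.closure ({a, b} : Set G) ≤ N :=
    (Subgroup.closure_le N).2 (by rintro x (rfl | rfl) <;> assumption)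
  rw [hgen] at hle
  exact top_le_iff.1 hle
end

section
/- Let G be a group that is either finite or finitely generated and solvable. Then for every integer n > 1, the weight of G equals n if and only if the weight of the abelianisation G^ab equals n; moreover, the weight of G is at most 1 if and only if the weight of G^ab is at most 1. In particular, every nontrivial finite perfect group is the normal closure of a single element. -/
open Pointwise
open scoped commutatorElement

universe u

section Aux

variable {G : Type u} [Group G]

private lemma subgroup_eq_top_of_subsingleton [Subsingleton G] (H : Subgroup G) : H = ⊤ :=
  (Subgroup.eq_top_iff' H).mpr fun x => by rw [Subsingleton.elim x 1]; exact one_mem _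

private lemma normalClosure_empty_eq_bot : Subgroup.normalClosure (∅ : Set G) = ⊥ :=
  le_antisymm (Subgroup.normalClosure_le_normal (Set.empty_subset _)) bot_le

/-- The key finite lemma: in a finite group, if the normal closure of `insert a s` together
with the commutator subgroup is everything, then `a` can be corrected by an element of the
commutator subgroup so that the normal closure of `insert (a*c) s` is everything. -/
private lemma key_finite : ∀ n : ℕ, ∀ (G : Type u) [Group G] [Finite G], Nat.card G = n →
    ∀ (a : G) (s : Set G),
      Subgroup.normalClosure (insert a s) ⊔ commutator G = ⊤ →
      ∃ c ∈ commutator G, Subgroup.normalClosure (insert (a * c) s) = ⊤ := by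
  intro n
  induction n using Nat.strong_induction_on with
  | _ n ih =>
    intro G _ _ hn a s hs
    by_cases hsub : Subsingleton G
    · exact ⟨1, one_mem _, subgroup_eq_top_of_subsingleton _⟩
    haveI hnt : Nontrivial G := not_subsingleton_iff_nontrivial.mp hsub
    -- a minimal nontrivial normal subgroup L
    have hPne : {m : ℕ | ∃ L : Subgroup G, L.Normal ∧ L ≠ ⊥ ∧ Nat.card L = m}.Nonempty := by
      refine ⟨Nat.card (⊤ : Subgroup G), ⊤, inferInstance, fun h => ?_, rfl⟩
      obtain ⟨g, hg⟩ := exists_ne (1 : G)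
      exact hg ((Subgroup.eq_bot_iff_forall _).mp h g (Subgroup.mem_top g))
    obtain ⟨L, hLnorm, hLbot, hLcard⟩ := Nat.sInf_mem hPne
    haveI := hLnorm
    have hLmin : ∀ K : Subgroup G, K.Normal → K ≤ L → K ≠ ⊥ → K = L := by
      intro K hKn hKL hKbot
      refine Subgroup.eq_of_le_of_card_ge hKL ?_
      rw [hLcard]
      exact Nat.sInf_le ⟨K, hKn, hKbot, rfl⟩
    haveI hLnt : Nontrivial L := (Subgroup.nontrivial_iff_ne_bot L).mpr hLbot
    set φ := QuotientGroup.mk' L with hφdef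
    have hφ : Function.Surjective φ := QuotientGroup.mk'_surjective L
    have hcard : Nat.card (G ⧸ L) < n := by
      rw [← hn, Subgroup.card_eq_card_quotient_mul_card_subgroup L]
      exact (lt_mul_iff_one_lt_right Nat.card_pos).mpr
        ((Subgroup.one_lt_card_iff_ne_bot (H := L)).mpr hLbot)
    -- push hypothesis to the quotient
    have hmapcomm : Subgroup.map φ (commutator G) = commutator (G ⧸ L) := by
      rw [commutator_def, Subgroup.map_commutator,
        Subgroup.map_top_of_surjective _ hφ, ← commutator_def]
    have hquot : Subgroup.normalClosure (insert (φ a) (φ '' s)) ⊔ commutator (G ⧸ L) = ⊤ := by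
      have h := congrArg (Subgroup.map φ) hs
      rwa [Subgroup.map_sup, Subgroup.map_normalClosure _ _ hφ, Set.image_insert_eq,
        hmapcomm, Subgroup.map_top_of_surjective _ hφ] at h
    obtain ⟨cbar, hcbar, hQtop⟩ := ih _ hcard (G ⧸ L) rfl (φ a) (φ '' s) hquot
    obtain ⟨c₀, hc₀, hc₀eq⟩ : ∃ c₀ ∈ commutator G, φ c₀ = cbar := by
      rw [← hmapcomm] at hcbar
      exact hcbar
    -- the candidate normal closures
    have hNsup : ∀ x ∈ L, Subgroup.normalClosure (insert (a * c₀ * x) s) ⊔ L = ⊤ := by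
      intro x hx
      have hmap : Subgroup.map φ (Subgroup.normalClosure (insert (a * c₀ * x) s)) = ⊤ := by
        rw [Subgroup.map_normalClosure _ _ hφ, Set.image_insert_eq]
        have hφx : φ (a * c₀ * x) = φ a * cbar := by
          have : φ x = 1 := (QuotientGroup.eq_one_iff x).mpr hx
          rw [map_mul, map_mul, hc₀eq, this, mul_one]
        rw [hφx]
        exact hQtop
      have h := congrArg (Subgroup.comap φ) hmap
      rwa [Subgroup.comap_map_eq, QuotientGroup.ker_mk', Subgroup.comap_top] at h
    have habs : ∀ x ∈ commutator G,
        Subgroup.normalClosure (insert (a * c₀ * x) s) ⊔ commutator G = ⊤ := by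
      intro x hx
      rw [eq_top_iff, ← hs]
      refine sup_le ?_ le_sup_right
      refine Subgroup.normalClosure_le_normal ?_
      intro y hy
      rcases Set.mem_insert_iff.mp hy with rfl | hy
      · have h1 : y * c₀ * x ∈ Subgroup.normalClosure (insert (y * c₀ * x) s) ⊔ commutator G :=
          Subgroup.mem_sup_left (Subgroup.subset_normalClosure (Set.mem_insert _ _))
        have h2 : (c₀ * x)⁻¹ ∈ Subgroup.normalClosure (insert (y * c₀ * x) s) ⊔ commutator G :=
          Subgroup.mem_sup_right (inv_mem (mul_mem hc₀ hx))
        have h3 := mul_mem h1 h2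
        simpa [mul_assoc] using h3
      · exact Subgroup.mem_sup_left (Subgroup.subset_normalClosure (Set.mem_insert_of_mem _ hy))
    have hdich : ∀ x ∈ L, Subgroup.normalClosure (insert (a * c₀ * x) s) ⊓ L = ⊥ ∨
        Subgroup.normalClosure (insert (a * c₀ * x) s) = ⊤ := by
      intro x hx
      by_cases h : Subgroup.normalClosure (insert (a * c₀ * x) s) ⊓ L = ⊥
      · exact Or.inl h
      · right
        have hK : Subgroup.normalClosure (insert (a * c₀ * x) s) ⊓ L = L :=
          hLmin _ (Subgroup.normal_inf_normal _ _) inf_le_right h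
        have hLle : L ≤ Subgroup.normalClosure (insert (a * c₀ * x) s) := inf_eq_right.mp hK
        rw [← hNsup x hx, sup_eq_left.mpr hLle]
    have hcent : ∀ x ∈ L, Subgroup.normalClosure (insert (a * c₀ * x) s) ⊓ L = ⊥ →
        ∀ ℓ ∈ L, (a * c₀ * x) * ℓ = ℓ * (a * c₀ * x) := by
      intro x hxL hbot ℓ hℓ
      set g := a * c₀ * x with hg
      have hgN : g ∈ Subgroup.normalClosure (insert g s) :=
        Subgroup.subset_normalClosure (Set.mem_insert _ _)
      have h1 : ℓ * g * ℓ⁻¹ * g⁻¹ ∈ Subgroup.normalClosure (insert g s) :=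
        mul_mem (Subgroup.normalClosure_normal.conj_mem g hgN ℓ) (inv_mem hgN)
      have h2 : ℓ * g * ℓ⁻¹ * g⁻¹ ∈ L := by
        have hin : g * ℓ⁻¹ * g⁻¹ ∈ L := hLnorm.conj_mem _ (L.inv_mem hℓ) g
        have := mul_mem hℓ hin
        simpa [mul_assoc] using this
      have h3 : ℓ * g * ℓ⁻¹ * g⁻¹ = 1 := by
        have : ℓ * g * ℓ⁻¹ * g⁻¹ ∈ Subgroup.normalClosure (insert g s) ⊓ L := ⟨h1, h2⟩
        rwa [hbot, Subgroup.mem_bot] at this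
      have h4 : ℓ * g * ℓ⁻¹ = g := by rwa [mul_inv_eq_one] at h3
      have h5 : ℓ * g = g * ℓ := by rwa [mul_inv_eq_iff_eq_mul] at h4
      exact h5.symm
    -- case on whether `x = 1` already works
    by_cases hN1 : Subgroup.normalClosure (insert (a * c₀ * 1) s) = ⊤
    · exact ⟨c₀, hc₀, by rw [mul_one] at hN1; exact hN1⟩
    have hbot1 : Subgroup.normalClosure (insert (a * c₀ * 1) s) ⊓ L = ⊥ :=
      (hdich 1 (one_mem L)).resolve_right hN1
    -- L is nonabelian
    have hLnonab : ∃ ℓ₀ ∈ L, ∃ ℓ₁ ∈ L, ℓ₀ * ℓ₁ ≠ ℓ₁ * ℓ₀ := by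
      by_contra hab
      push_neg at hab
      have hcle : commutator G ≤ Subgroup.normalClosure (insert (a * c₀ * 1) s) := by
        rw [commutator_def, Subgroup.commutator_le]
        intro p _ q _
        set ψ := QuotientGroup.mk' (Subgroup.normalClosure (insert (a * c₀ * 1) s)) with hψ
        have hdec : ∀ r : G, ∃ u ∈ Subgroup.normalClosure (insert (a * c₀ * 1) s),
            ∃ ℓ ∈ L, r = u * ℓ := by
          intro r
          have hr : r ∈ (Subgroup.normalClosure (insert (a * c₀ * 1) s) : Set G) *
              (L : Set G) := by
            rw [← Subgroup.mul_normal, hNsup 1 (one_mem L)]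
            exact Subgroup.mem_top r
          obtain ⟨u, hu, ℓ, hℓ, hmul⟩ := Set.mem_mul.mp hr
          exact ⟨u, hu, ℓ, hℓ, hmul.symm⟩
        obtain ⟨u, hu, ℓ, hℓ, rfl⟩ := hdec p
        obtain ⟨v, hv, ℓ', hℓ', rfl⟩ := hdec q
        have hψu : ψ u = 1 := (QuotientGroup.eq_one_iff u).mpr hu
        have hψv : ψ v = 1 := (QuotientGroup.eq_one_iff v).mpr hv
        have hcomm1 : ⁅ℓ, ℓ'⁆ = 1 := by
          rw [commutatorElement_def, mul_inv_eq_one, mul_inv_eq_iff_eq_mul]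
          exact hab ℓ hℓ ℓ' hℓ'
        have : ψ ⁅u * ℓ, v * ℓ'⁆ = 1 := by
          rw [map_commutatorElement, map_mul, map_mul, hψu, hψv, one_mul, one_mul,
            ← map_commutatorElement, hcomm1, map_one]
        exact (QuotientGroup.eq_one_iff _).mp this
      have : Subgroup.normalClosure (insert (a * c₀ * 1) s) = ⊤ := by
        rw [← habs 1 (one_mem _), sup_eq_left.mpr hcle]
      exact hN1 this
    obtain ⟨ℓ₀, hℓ₀, ℓ₁, hℓ₁, hne⟩ := hLnonab
    -- L is contained in the commutator subgroup
    have hLcomm : L ≤ commutator G := by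
      have hinf : commutator G ⊓ L ≠ ⊥ := by
        intro hbot
        apply hne
        have h1 : ⁅ℓ₀, ℓ₁⁆ ∈ commutator G ⊓ L := by
          constructor
          · rw [commutator_def]
            exact Subgroup.commutator_mem_commutator (Subgroup.mem_top _) (Subgroup.mem_top _)
          · exact mul_mem (mul_mem (mul_mem hℓ₀ hℓ₁) (L.inv_mem hℓ₀)) (L.inv_mem hℓ₁)
        rw [hbot, Subgroup.mem_bot, commutatorElement_def, mul_inv_eq_one,
          mul_inv_eq_iff_eq_mul] at h1
        exact h1
      have := hLmin _ (Subgroup.normal_inf_normal _ _) inf_le_right hinf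
      exact inf_eq_right.mp this
    rcases hdich ℓ₀ hℓ₀ with hbot | htop
    · exfalso
      apply hne
      have hg1 := hcent 1 (one_mem L) hbot1 ℓ₁ hℓ₁
      have hg2 := hcent ℓ₀ hℓ₀ hbot ℓ₁ hℓ₁
      rw [mul_one] at hg1
      -- hg1 : (a*c₀) * ℓ₁ = ℓ₁ * (a*c₀), hg2 : (a*c₀*ℓ₀) * ℓ₁ = ℓ₁ * (a*c₀*ℓ₀)
      have : a * c₀ * (ℓ₀ * ℓ₁) = a * c₀ * (ℓ₁ * ℓ₀) := by
        calc a * c₀ * (ℓ₀ * ℓ₁) = a * c₀ * ℓ₀ * ℓ₁ := (mul_assoc (a * c₀) ℓ₀ ℓ₁).symm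
        _ = ℓ₁ * (a * c₀ * ℓ₀) := hg2
        _ = ℓ₁ * (a * c₀) * ℓ₀ := (mul_assoc ℓ₁ (a * c₀) ℓ₀).symm
        _ = a * c₀ * ℓ₁ * ℓ₀ := by rw [← hg1]
        _ = a * c₀ * (ℓ₁ * ℓ₀) := mul_assoc _ _ _
      exact mul_left_cancel this
    · exact ⟨c₀ * ℓ₀, mul_mem hc₀ (hLcomm hℓ₀), by rwa [← mul_assoc]⟩

/-- The solvable analogue. -/
private lemma key_solvable [Group.IsSolvable G] (s : Set G)
    (hs : Subgroup.normalClosure s ⊔ commutator G = ⊤) : Subgroup.normalClosure s = ⊤ := by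
  set N := Subgroup.normalClosure s with hN
  haveI : N.Normal := Subgroup.normalClosure_normal
  set φ := QuotientGroup.mk' N with hφdef
  have hφ : Function.Surjective φ := QuotientGroup.mk'_surjective N
  have hNmap : Subgroup.map φ N = ⊥ := by
    rw [eq_bot_iff]
    intro y hy
    obtain ⟨x, hx, rfl⟩ := Subgroup.mem_map.mp hy
    rw [Subgroup.mem_bot]
    exact (QuotientGroup.eq_one_iff x).mpr hx
  have hcomm : commutator (G ⧸ N) = ⊤ := by
    have h := congrArg (Subgroup.map φ) hs
    rwa [Subgroup.map_sup, hNmap, bot_sup_eq, commutator_def, Subgroup.map_commutator,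
      Subgroup.map_top_of_surjective _ hφ, ← commutator_def] at h
  have hder : ∀ m : ℕ, derivedSeries (G ⧸ N) m = ⊤ := by
    intro m
    induction m with
    | zero => exact derivedSeries_zero _
    | succ k ihk => rw [derivedSeries_succ, ihk, ← commutator_def, hcomm]
  obtain ⟨m, hm⟩ := (inferInstance : Group.IsSolvable (G ⧸ N)).solvable
  have htb : (⊤ : Subgroup (G ⧸ N)) = ⊥ := by rw [← hder m, hm]
  rw [eq_top_iff]
  intro g _
  have hg : φ g ∈ (⊥ : Subgroup (G ⧸ N)) := htb ▸ Subgroup.mem_top _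
  rw [Subgroup.mem_bot] at hg
  exact (QuotientGroup.eq_one_iff g).mp hg

private lemma weight_set_nonempty (hG : Finite G ∨ Group.FG G) :
    {n : ℕ | ∃ S : Finset G, S.card = n ∧ Subgroup.normalClosure (S : Set G) = ⊤}.Nonempty := by
  rcases hG with h | h
  · haveI := h
    haveI := Fintype.ofFinite G
    refine ⟨(Finset.univ : Finset G).card, Finset.univ, rfl, ?_⟩
    rw [Finset.coe_univ, eq_top_iff]
    exact fun x _ => Subgroup.subset_normalClosure (Set.mem_univ x)
  · obtain ⟨S, hS, hfin⟩ := Group.fg_iff.mp h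
    refine ⟨hfin.toFinset.card, hfin.toFinset, rfl, ?_⟩
    rw [Set.Finite.coe_toFinset, eq_top_iff, ← hS]
    exact Subgroup.closure_le_normalClosure

private lemma abelianization_of_surjective :
    Function.Surjective (Abelianization.of : G →* Abelianization G) := fun x =>
  QuotientGroup.induction_on x fun g => ⟨g, rfl⟩

private lemma abelianization_ker_of :
    (Abelianization.of : G →* Abelianization G).ker = commutator G := by
  ext x
  exact QuotientGroup.eq_one_iff x

private lemma weight_abelianization_le (hG : Finite G ∨ Group.FG G) :
    weight (Abelianization G) ≤ weight G := by
  classical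
  obtain ⟨S, hSc, hSt⟩ := Nat.sInf_mem (weight_set_nonempty hG)
  have hsurj := abelianization_of_surjective (G := G)
  refine le_trans (Nat.sInf_le ⟨S.image Abelianization.of, rfl, ?_⟩)
    (le_trans Finset.card_image_le (le_of_eq hSc))
  rw [Finset.coe_image, ← Subgroup.map_normalClosure _ _ hsurj, hSt,
    Subgroup.map_top_of_surjective _ hsurj]

private lemma weight_le_max (hG : Finite G ∨ (Group.FG G ∧ IsSolvable G)) :
    weight G ≤ max (weight (Abelianization G)) 1 := by
  classical
  have hsurj := abelianization_of_surjective (G := G)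
  have habne : {n : ℕ | ∃ S : Finset (Abelianization G), S.card = n ∧
      Subgroup.normalClosure (S : Set (Abelianization G)) = ⊤}.Nonempty := by
    apply weight_set_nonempty
    rcases hG with h | h
    · exact Or.inl (Finite.of_surjective _ hsurj)
    · haveI := h.1
      exact Or.inr (Group.fg_of_surjective hsurj)
  obtain ⟨T, hTc, hTt⟩ := Nat.sInf_mem habne
  obtain ⟨lft, hlft⟩ : ∃ lft : Abelianization G → G, ∀ x, Abelianization.of (lft x) = x :=
    ⟨Function.surjInv hsurj, Function.surjInv_eq hsurj⟩
  set S : Finset G := T.image lft with hSdef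
  have hScard : S.card ≤ weight (Abelianization G) := by
    have h1 : S.card ≤ T.card := hSdef ▸ Finset.card_image_le
    exact le_trans h1 (le_of_eq hTc)
  have himg : Abelianization.of '' (S : Set G) = (T : Set (Abelianization G)) := by
    rw [hSdef, Finset.coe_image, ← Set.image_comp]
    have : (Abelianization.of : G →* Abelianization G) ∘ lft = id := by
      funext x
      exact hlft x
    rw [this, Set.image_id]
  have hkey : Subgroup.normalClosure (S : Set G) ⊔ commutator G = ⊤ := by
    have hmap : Subgroup.map Abelianization.of
        (Subgroup.normalClosure (S : Set G) ⊔ commutator G) = ⊤ := by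
      rw [Subgroup.map_sup, Subgroup.map_normalClosure _ _ hsurj, himg, hTt, top_sup_eq]
    have h := congrArg (Subgroup.comap (Abelianization.of : G →* Abelianization G)) hmap
    rw [Subgroup.comap_map_eq, abelianization_ker_of, Subgroup.comap_top] at h
    rwa [sup_assoc, sup_idem] at h
  rcases hG with hfin | ⟨hfg, hsol⟩
  · haveI := hfin
    rcases S.eq_empty_or_nonempty with hSe | ⟨a, ha⟩
    · have hct : commutator G = ⊤ := by
        rw [hSe] at hkey
        rwa [Finset.coe_empty, normalClosure_empty_eq_bot, bot_sup_eq] at hkey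
      obtain ⟨c, hc, hctop⟩ := key_finite (Nat.card G) G rfl 1 (∅ : Set G)
        (by rw [hct]; exact sup_top_eq _)
      refine le_trans (Nat.sInf_le ⟨{1 * c}, Finset.card_singleton _, ?_⟩) (le_max_right _ _)
      rw [Finset.coe_singleton]
      simpa using hctop
    · have hins : insert a ((S.erase a : Finset G) : Set G) = (S : Set G) := by
        rw [← Finset.coe_insert, Finset.insert_erase ha]
      obtain ⟨c, hc, hctop⟩ := key_finite (Nat.card G) G rfl a ((S.erase a : Finset G) : Set G)
        (by rw [hins]; exact hkey)
      refine le_trans (Nat.sInf_le ⟨insert (a * c) (S.erase a), rfl, ?_⟩) ?_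
      · rw [Finset.coe_insert]; exact hctop
      · refine le_trans ?_ (le_trans hScard (le_max_left _ _))
        calc (insert (a * c) (S.erase a)).card ≤ (S.erase a).card + 1 := Finset.card_insert_le _ _
        _ = (S.card - 1) + 1 := by rw [Finset.card_erase_of_mem ha]
        _ = S.card := Nat.succ_pred_eq_of_pos (Finset.card_pos.mpr ⟨a, ha⟩)
  · haveI := hsol
    have := @key_solvable _ _ hsol (S : Set G) hkey
    exact le_trans (Nat.sInf_le ⟨S, rfl, this⟩) (le_trans hScard (le_max_left _ _))

private lemma weight_eq_zero_of_subsingleton (H : Type u) [Group H] [Subsingleton H] :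
    weight H = 0 :=
  Nat.eq_zero_of_le_zero (Nat.sInf_le ⟨∅, Finset.card_empty, by
    rw [Finset.coe_empty]; exact subgroup_eq_top_of_subsingleton _⟩)

private lemma one_le_weight (hG : Finite G ∨ Group.FG G) [Nontrivial G] : 1 ≤ weight G := by
  obtain ⟨S, hSc, hSt⟩ := Nat.sInf_mem (weight_set_nonempty hG)
  by_contra h
  push_neg at h
  have hcard : S.card < 1 := by rw [hSc]; exact h
  have hS0 : S = ∅ := Finset.card_eq_zero.mp (by omega)
  rw [hS0, Finset.coe_empty, normalClosure_empty_eq_bot] at hSt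
  obtain ⟨g, hg⟩ := exists_ne (1 : G)
  exact hg (Subgroup.mem_bot.mp (hSt ▸ Subgroup.mem_top g))

end Aux

/-- For a group `G` that is finite, or finitely generated and solvable: for every `n > 1`
the weight of `G` equals `n` iff the weight of `G^ab` equals `n`; and the weight of `G`
is at most `1` iff the weight of `G^ab` is at most `1`. In particular a nontrivial
perfect such group (e.g. any nontrivial finite perfect group) has weight `1`, i.e. it is
the normal closure of a single element. -/
theorem weight_eq_weight_abelianization
    (G : Type*) [Group G] (hG : Finite G ∨ (Group.FG G ∧ IsSolvable G)) :
    (∀ n : ℕ, 1 < n → (weight G = n ↔ weight (Abelianization G) = n)) ∧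
    (weight G ≤ 1 ↔ weight (Abelianization G) ≤ 1) ∧
    (Nontrivial G → Subsingleton (Abelianization G) → weight G = 1) := by
  have hG' : Finite G ∨ Group.FG G := hG.imp id And.left
  have L1 : weight (Abelianization G) ≤ weight G := weight_abelianization_le hG'
  have L2 : weight G ≤ max (weight (Abelianization G)) 1 := weight_le_max hG
  refine ⟨?_, ?_, ?_⟩
  · intro n hn
    constructor
    · intro h
      by_contra hne
      have h1 : weight (Abelianization G) ≤ n := h ▸ L1
      have h2 : weight (Abelianization G) < n := lt_of_le_of_ne h1 hne
      have h3 : weight G ≤ n - 1 := le_trans L2 (max_le (by omega) (by omega))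
      omega
    · intro h
      have hup : weight G ≤ n := le_trans L2 (by rw [h]; exact max_le le_rfl (by omega))
      have hlo : n ≤ weight G := h ▸ L1
      omega
  · constructor
    · intro h
      exact le_trans L1 h
    · intro h
      exact le_trans L2 (max_le h le_rfl)
  · intro hnt hss
    have hab0 : weight (Abelianization G) = 0 := weight_eq_zero_of_subsingleton _
    have hle : weight G ≤ 1 := le_trans L2 (by rw [hab0]; exact max_le (by omega) le_rfl)
    have hge : 1 ≤ weight G := one_le_weight hG'
    omega
end

section
/- Let G be a finitely generated group and n ≥ 1 an integer. Then G has a finite proper n-covering by normal finite-index subgroups (i.e., there exist finitely many proper normal finite-index subgroups N_1, ..., N_k of G such that every set of n elements of G is contained in some N_i) if and only if the weight of the abelianisation G^ab is at least n+1, equivalently, if and only if there exist a prime p and a surjective group homomorphism from G onto the elementary abelian p-group (C_p)^{n+1} of rank n+1. -/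
/-- A group `G` has a *finite proper `n`-covering by normal finite-index subgroups* if
there are finitely many proper normal finite-index subgroups of `G` such that every
collection of `n` elements of `G` lies in one of them. -/
def HasFiniteProperNCovering (G : Type*) [Group G] (n : ℕ) : Prop :=
  ∃ (k : ℕ) (N : Fin k → Subgroup G),
    (∀ i, (N i).Normal ∧ N i ≠ ⊤ ∧ (N i).FiniteIndex) ∧
    ∀ f : Fin n → G, ∃ i, ∀ j, f j ∈ N i


open Pointwise
open scoped commutatorElement

section MaxNormal

variable {G : Type*} [Group G]

/-- `H` is a maximal proper normal subgroup of `G`. -/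
def IsMaxNormal (H : Subgroup G) : Prop :=
  H.Normal ∧ H ≠ ⊤ ∧ ∀ K : Subgroup G, K.Normal → H < K → K = ⊤

lemma aux_sup_eq_top {H A : Subgroup G} (hH : IsMaxNormal H) (hA : A.Normal)
    (hAH : ¬ A ≤ H) : A ⊔ H = ⊤ := by
  haveI := hH.1; haveI := hA
  rcases eq_or_lt_of_le (le_sup_right : H ≤ A ⊔ H) with h | h
  · exact absurd (le_sup_left.trans h.ge) hAH
  · exact hH.2.2 _ (Subgroup.sup_normal A H) h

lemma aux_inf_normal (𝒮 : Finset (Subgroup G)) (h : ∀ H ∈ 𝒮, (H : Subgroup G).Normal) :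
    (𝒮.inf id).Normal := by
  classical
  induction 𝒮 using Finset.induction_on with
  | empty => simpa using (inferInstance : (⊤ : Subgroup G).Normal)
  | @insert H s hns ih =>
      rw [Finset.inf_insert]
      simp only [id_eq]
      haveI : H.Normal := h H (Finset.mem_insert_self _ _)
      haveI : (s.inf id).Normal := ih fun K hK => h K (Finset.mem_insert_of_mem hK)
      exact Subgroup.normal_inf_normal _ _

lemma aux_comm_sup {H A B : Subgroup G} (hH : IsMaxNormal H) (hG' : ¬ commutator G ≤ H)
    (hA : A.Normal) (hB : B.Normal) (hAt : A ⊔ H = ⊤) (hBt : B ⊔ H = ⊤) :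
    ⁅A, B⁆ ⊔ H = ⊤ := by
  haveI := hH.1; haveI := hA; haveI := hB
  by_cases hle : ⁅A, B⁆ ≤ H
  · exfalso
    apply hG'
    rw [commutator_def, Subgroup.commutator_le]
    intro x _ y _
    have hx : x ∈ ((A : Set G) * (H : Set G)) := by
      rw [← Subgroup.mul_normal, hAt]; exact Set.mem_univ x
    have hy : y ∈ ((B : Set G) * (H : Set G)) := by
      rw [← Subgroup.mul_normal, hBt]; exact Set.mem_univ y
    obtain ⟨a, ha, u, hu, rfl⟩ := hx
    obtain ⟨b, hb, w, hw, rfl⟩ := hy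
    rw [← QuotientGroup.eq_one_iff]
    have h1 : ((a * u : G) : G ⧸ H) = ((a : G) : G ⧸ H) := by
      rw [QuotientGroup.mk_mul, (QuotientGroup.eq_one_iff u).2 hu, mul_one]
    have h2 : ((b * w : G) : G ⧸ H) = ((b : G) : G ⧸ H) := by
      rw [QuotientGroup.mk_mul, (QuotientGroup.eq_one_iff w).2 hw, mul_one]
    calc ((⁅a * u, b * w⁆ : G) : G ⧸ H)
        = ⁅((a*u : G) : G ⧸ H), ((b*w : G) : G ⧸ H)⁆ :=
          map_commutatorElement (QuotientGroup.mk' H) _ _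
      _ = ⁅((a : G) : G ⧸ H), ((b : G) : G ⧸ H)⁆ := by rw [h1, h2]
      _ = ((⁅a, b⁆ : G) : G ⧸ H) := (map_commutatorElement (QuotientGroup.mk' H) _ _).symm
      _ = 1 := (QuotientGroup.eq_one_iff _).2 (hle (Subgroup.commutator_mem_commutator ha hb))
  · exact aux_sup_eq_top hH (Subgroup.commutator_normal A B) hle

lemma aux_inf_comm_sup {H₀ H₁ : Subgroup G} (h0 : IsMaxNormal H₀) (h1 : IsMaxNormal H₁)
    (hne : H₁ ≠ H₀) (hG' : ¬ commutator G ≤ H₀) :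
    (commutator G ⊓ H₁) ⊔ H₀ = ⊤ := by
  haveI := h0.1; haveI := h1.1
  by_cases hle : commutator G ⊓ H₁ ≤ H₀
  · exfalso
    apply hG'
    have hnle : ¬ H₁ ≤ H₀ := by
      intro h
      rcases eq_or_lt_of_le h with h' | h'
      · exact hne h'
      · exact h0.2.1 (h1.2.2 _ h0.1 h')
    have hsup : H₁ ⊔ H₀ = ⊤ := aux_sup_eq_top h0 h1.1 hnle
    rw [commutator_def, Subgroup.commutator_le]
    intro x _ y _
    have hy : y ∈ ((H₁ : Set G) * (H₀ : Set G)) := by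
      rw [← Subgroup.mul_normal, hsup]; exact Set.mem_univ y
    obtain ⟨b, hb, w, hw, rfl⟩ := hy
    rw [← QuotientGroup.eq_one_iff]
    have h2 : ((b * w : G) : G ⧸ H₀) = ((b : G) : G ⧸ H₀) := by
      rw [QuotientGroup.mk_mul, (QuotientGroup.eq_one_iff w).2 hw, mul_one]
    have hxb : ⁅x, b⁆ ∈ commutator G ⊓ H₁ := by
      constructor
      · rw [commutator_def]
        exact Subgroup.commutator_mem_commutator (Subgroup.mem_top x) (Subgroup.mem_top b)
      · have : x * b * x⁻¹ ∈ H₁ := h1.1.conj_mem b hb x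
        simpa [commutatorElement_def, mul_assoc] using mul_mem this (inv_mem hb)
    calc ((⁅x, b * w⁆ : G) : G ⧸ H₀)
        = ⁅((x : G) : G ⧸ H₀), ((b*w : G) : G ⧸ H₀)⁆ :=
          map_commutatorElement (QuotientGroup.mk' H₀) _ _
      _ = ⁅((x : G) : G ⧸ H₀), ((b : G) : G ⧸ H₀)⁆ := by rw [h2]
      _ = ((⁅x, b⁆ : G) : G ⧸ H₀) := (map_commutatorElement (QuotientGroup.mk' H₀) _ _).symm
      _ = 1 := (QuotientGroup.eq_one_iff _).2 (hle hxb)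
  · haveI : (commutator G).Normal := Subgroup.commutator_normal ⊤ ⊤
    exact aux_sup_eq_top h0 (Subgroup.normal_inf_normal _ _) hle

end MaxNormal

section MaxNormal2
variable {G : Type*} [Group G]

lemma aux_claim : ∀ 𝒮 : Finset (Subgroup G), (∀ H ∈ 𝒮, IsMaxNormal H) →
    ∀ H₀ : Subgroup G, IsMaxNormal H₀ → ¬ commutator G ≤ H₀ → H₀ ∉ 𝒮 →
    (commutator G ⊓ 𝒮.inf id) ⊔ H₀ = ⊤ := by
  classical
  haveI : (commutator G).Normal := Subgroup.commutator_normal ⊤ ⊤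
  intro 𝒮
  induction 𝒮 using Finset.induction_on with
  | empty =>
      intro _ H₀ h0 hc _
      simpa [Finset.inf_empty] using aux_sup_eq_top h0 inferInstance hc
  | @insert H₁ s hns ih =>
      intro hS H₀ h0 hc hnot
      have h1 : IsMaxNormal H₁ := hS H₁ (Finset.mem_insert_self _ _)
      haveI := h1.1
      have hsmem : ∀ H ∈ s, IsMaxNormal H := fun K hK => hS K (Finset.mem_insert_of_mem hK)
      have hinf : (s.inf id).Normal := aux_inf_normal s fun K hK => (hsmem K hK).1
      haveI := hinf
      have hA : (commutator G ⊓ s.inf id).Normal := Subgroup.normal_inf_normal _ _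
      have hB : (commutator G ⊓ H₁).Normal := Subgroup.normal_inf_normal _ _
      have hAt : (commutator G ⊓ s.inf id) ⊔ H₀ = ⊤ :=
        ih hsmem H₀ h0 hc fun h => hnot (Finset.mem_insert_of_mem h)
      have hBt : (commutator G ⊓ H₁) ⊔ H₀ = ⊤ :=
        aux_inf_comm_sup h0 h1 (fun h => hnot (h ▸ Finset.mem_insert_self _ _)) hc
      have hct := aux_comm_sup h0 hc hA hB hAt hBt
      rw [eq_top_iff, ← hct]
      apply sup_le_sup_right
      haveI := hA; haveI := hB
      have hle1 : ⁅commutator G ⊓ s.inf id, commutator G ⊓ H₁⁆ ≤ commutator G ⊓ s.inf id :=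
        Subgroup.commutator_le_left _ _
      have hle2 : ⁅commutator G ⊓ s.inf id, commutator G ⊓ H₁⁆ ≤ commutator G ⊓ H₁ :=
        Subgroup.commutator_le_right _ _
      rw [Finset.inf_insert]
      simp only [id_eq]
      refine le_inf (hle1.trans inf_le_left) (le_inf (hle2.trans inf_le_right)
        (hle1.trans inf_le_right))

lemma aux_avoid : ∀ 𝒮 : Finset (Subgroup G),
    (∀ H ∈ 𝒮, IsMaxNormal H ∧ ¬ commutator G ≤ H) →
    ∀ a : G, ∃ c ∈ commutator G, ∀ H ∈ 𝒮, a * c ∉ H := by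
  classical
  intro 𝒮
  induction 𝒮 using Finset.induction_on with
  | empty => exact fun _ a => ⟨1, one_mem _, by simp⟩
  | @insert H₀ s hns ih =>
      intro hS a
      obtain ⟨c, hc, hcs⟩ := ih (fun K hK => hS K (Finset.mem_insert_of_mem hK)) a
      have h0 := hS H₀ (Finset.mem_insert_self _ _)
      by_cases hmem : a * c ∈ H₀
      · have hsup : (commutator G ⊓ s.inf id) ⊔ H₀ = ⊤ :=
          aux_claim s (fun K hK => (hS K (Finset.mem_insert_of_mem hK)).1) H₀ h0.1 h0.2 hns
        have hex : ∃ d ∈ commutator G ⊓ s.inf id, d ∉ H₀ := by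
          by_contra h'
          push_neg at h'
          exact h0.1.2.1 (by rw [eq_top_iff, ← hsup]; exact sup_le h' le_rfl)
        obtain ⟨d, hd, hdH⟩ := hex
        refine ⟨c * d, mul_mem hc hd.1, ?_⟩
        intro K hK
        rcases Finset.mem_insert.1 hK with rfl | hK'
        · intro h
          rw [← mul_assoc] at h
          exact hdH ((mul_mem_cancel_left hmem).1 h)
        · intro h
          rw [← mul_assoc] at h
          have hdK : d ∈ K := (Finset.inf_le hK' : s.inf id ≤ id K) hd.2
          exact hcs K hK' ((mul_mem_cancel_right hdK).1 h)
      · refine ⟨c, hc, ?_⟩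
        intro K hK
        rcases Finset.mem_insert.1 hK with rfl | hK'
        · exact hmem
        · exact hcs K hK'

lemma aux_exists_max (N : Subgroup G) (hN : N.Normal) (hNtop : N ≠ ⊤)
    (hfi : N.FiniteIndex) : ∃ M : Subgroup G, N ≤ M ∧ IsMaxNormal M := by
  classical
  haveI := hN; haveI := hfi
  set P : Set (Subgroup G) := {H | N ≤ H ∧ H.Normal ∧ H ≠ ⊤} with hP
  have hfin : P.Finite := by
    have hinj : Set.InjOn (fun H => Subgroup.map (QuotientGroup.mk' N) H) P := by
      intro H1 h1 H2 h2 heq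
      have e1 : Subgroup.comap (QuotientGroup.mk' N) (Subgroup.map (QuotientGroup.mk' N) H1) = H1 := by
        rw [Subgroup.comap_map_eq, QuotientGroup.ker_mk', sup_eq_left.2 h1.1]
      have e2 : Subgroup.comap (QuotientGroup.mk' N) (Subgroup.map (QuotientGroup.mk' N) H2) = H2 := by
        rw [Subgroup.comap_map_eq, QuotientGroup.ker_mk', sup_eq_left.2 h2.1]
      rw [← e1, ← e2]; simp only at heq; rw [heq]
    exact Set.Finite.of_finite_image (Set.toFinite _) hinj
  obtain ⟨M, hM, hmax⟩ : ∃ M ∈ P, ∀ K ∈ P, M ≤ K → M = K := by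
    obtain ⟨M, hM, hmax⟩ := Set.Finite.exists_maximalFor id P hfin ⟨N, le_rfl, hN, hNtop⟩
    exact ⟨M, hM, fun K hK hle => le_antisymm hle (hmax hK hle)⟩
  refine ⟨M, hM.1, hM.2.1, hM.2.2, ?_⟩
  intro K hK hlt
  by_contra hKtop
  exact absurd (hmax K ⟨hM.1.trans hlt.le, hK, hKtop⟩ hlt.le) (ne_of_lt hlt)

end MaxNormal2
section C2A
variable {G : Type*} [Group G]

lemma aux_c2a {n p : ℕ} (hp : p.Prime)
    (φ : G →* Multiplicative (Fin (n + 1) → ZMod p)) (hφ : Function.Surjective φ) :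
    HasFiniteProperNCovering G n := by
  classical
  haveI : Fact p.Prime := ⟨hp⟩
  set V := Fin (n + 1) → ZMod p with hV
  haveI : Finite (Module.Dual (ZMod p) V) :=
    Finite.of_injective _ DFunLike.coe_injective
  obtain ⟨k, ⟨e⟩⟩ := Finite.exists_equiv_fin {l : Module.Dual (ZMod p) V // l ≠ 0}
  -- the homomorphism attached to a functional
  set ψ : Module.Dual (ZMod p) V → (G →* Multiplicative (ZMod p)) :=
    fun l => (AddMonoidHom.toMultiplicative l.toAddMonoidHom).comp φ with hψ
  have hψapp : ∀ l x, ψ l x = Multiplicative.ofAdd (l (Multiplicative.toAdd (φ x))) :=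
    fun l x => rfl
  refine ⟨k, fun i => (ψ (e.symm i).1).ker, ?_, ?_⟩
  · intro i
    refine ⟨inferInstance, ?_, inferInstance⟩
    -- proper
    have hl : (e.symm i).1 ≠ 0 := (e.symm i).2
    set l : Module.Dual (ZMod p) V := (e.symm i).1 with hldef
    have : ∃ v : V, l v ≠ 0 := by
      by_contra h
      push_neg at h
      exact hl (LinearMap.ext h)
    obtain ⟨v, hv⟩ := this
    obtain ⟨x, hx⟩ := hφ (Multiplicative.ofAdd v)
    intro htop
    have hxk : x ∈ (ψ l).ker := by
      have : x ∈ (fun i => (ψ (e.symm i).1).ker) i := htop ▸ Subgroup.mem_top x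
      simpa [← hldef] using this
    rw [MonoidHom.mem_ker, hψapp, hx] at hxk
    simp at hxk
    exact hv hxk
  · intro f
    set v : Fin n → V := fun j => Multiplicative.toAdd (φ (f j)) with hv
    set W := Submodule.span (ZMod p) (Set.range v) with hW
    have hWne : W ≠ ⊤ := by
      intro h
      have h1 : Set.finrank (ZMod p) (Set.range v) ≤ n := by
        have : Set.range v = ((Finset.univ.image v : Finset V) : Set V) := by
          simp [Finset.coe_image]
        rw [Set.finrank, this]
        calc Module.finrank (ZMod p) (Submodule.span (ZMod p)
              ((Finset.univ.image v : Finset V) : Set V))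
            ≤ (Finset.univ.image v).card := finrank_span_finset_le_card _
          _ ≤ Finset.univ.card := Finset.card_image_le
          _ = n := by simp
      rw [Set.finrank, ← hW, h] at h1
      rw [finrank_top] at h1
      have : Module.finrank (ZMod p) V = n + 1 := Module.finrank_fin_fun (ZMod p)
      omega
    have hWlt : W < ⊤ := lt_top_iff_ne_top.2 hWne
    obtain ⟨l, hl0, hlW⟩ := Submodule.exists_dual_map_eq_bot_of_lt_top hWlt inferInstance
    refine ⟨e ⟨l, hl0⟩, fun j => ?_⟩
    simp only [Equiv.symm_apply_apply]
    rw [MonoidHom.mem_ker, hψapp]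
    have : l (v j) = 0 := by
      have hmem : v j ∈ W := Submodule.subset_span (Set.mem_range_self j)
      have : l (v j) ∈ Submodule.map l W := Submodule.mem_map_of_mem hmem
      rw [hlW] at this
      exact (Submodule.mem_bot _).1 this
    rw [← hv] at *
    rw [this]
    rfl
end C2A
section B2C
open DirectSum

variable {ι : Type} [Fintype ι]

/-- evaluation as an `AddMonoidHom` on a direct sum -/
private def evalHom [DecidableEq ι] (β : ι → Type*) [∀ i, AddCommGroup (β i)] (i : ι) :
    (⨁ i, β i) →+ β i :=
  AddMonoidHom.mk' (fun x => x i) (fun a b => by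
    change (a + b) i = a i + b i
    rw [DirectSum.add_apply])

@[simp] private lemma evalHom_apply [DecidableEq ι] (β : ι → Type*) [∀ i, AddCommGroup (β i)]
    (i : ι) (x : ⨁ i, β i) : evalHom β i x = x i := rfl

lemma aux_bound {r n : ℕ} (p e : ι → ℕ) (hp : ∀ i, (p i).Prime) (P : ℕ) (hP : P.Prime)
    (hcard : n < r + (Finset.univ.filter fun i => p i = P ∧ p i ^ e i ≠ 1).card) :
    ∃ π : ((Fin r →₀ ℤ) × ⨁ i, ZMod (p i ^ e i)) →+ (Fin (n + 1) → ZMod P),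
      Function.Surjective π := by
  classical
  haveI : Fact P.Prime := ⟨hP⟩
  set q : ι → ℕ := fun i => p i ^ e i with hq
  set cls : Finset ι := Finset.univ.filter (fun i => p i = P ∧ q i ≠ 1) with hcls
  have hdvd : ∀ i : ι, i ∈ cls → P ∣ q i := by
    intro i hi
    rw [hcls, Finset.mem_filter] at hi
    obtain ⟨-, hpi, hqi⟩ := hi
    have he : e i ≠ 0 := by
      intro h
      exact hqi (by rw [hq]; simp [h])
    rw [hq, ← hpi]
    exact dvd_pow_self _ he
  have hcardle : n + 1 ≤ Fintype.card (Fin r ⊕ {x // x ∈ cls}) := by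
    rw [Fintype.card_sum, Fintype.card_fin, Fintype.card_coe]
    omega
  obtain ⟨ρ⟩ := Function.Embedding.nonempty_of_card_le
    (α := Fin (n + 1)) (β := Fin r ⊕ {x // x ∈ cls}) (by simpa using hcardle)
  -- component homomorphisms
  set χ : Fin (n + 1) → (((Fin r →₀ ℤ) × ⨁ i, ZMod (q i)) →+ ZMod P) := fun t =>
    match ρ t with
    | Sum.inl j => (Int.castAddHom (ZMod P)).comp
        ((Finsupp.applyAddHom j).comp (AddMonoidHom.fst _ _))
    | Sum.inr s => ((ZMod.castHom (hdvd s.1 s.2) (ZMod P)).toAddMonoidHom).comp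
        ((evalHom (fun i => ZMod (q i)) s.1).comp (AddMonoidHom.snd _ _)) with hχ
  refine ⟨AddMonoidHom.mk' (fun x t => (χ t) x) (fun a b => by funext t; exact (χ t).map_add a b),
    ?_⟩
  intro w
  have hsingle : ∀ (t : Fin (n + 1)) (z : ZMod P),
      ∃ x : (Fin r →₀ ℤ) × ⨁ i, ZMod (q i), ∀ t', (χ t') x = (Pi.single t z : Fin (n+1) → ZMod P) t' := by
    intro t z
    cases hρ : ρ t with
    | inl j =>
        refine ⟨(Finsupp.single j (z.val : ℤ), 0), ?_⟩
        intro t'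
        by_cases htt : t' = t
        · subst htt
          rw [hχ]
          simp only [hρ]
          simp [ZMod.natCast_val, ZMod.cast_id]
        · have hne : ρ t' ≠ ρ t := fun h => htt (ρ.injective h)
          rw [Pi.single_eq_of_ne htt]
          rw [hχ]
          cases hρ' : ρ t' with
          | inl j' =>
              have hjj : j' ≠ j := by
                intro h
                exact hne (by rw [hρ', hρ, h])
              simp only [hρ']
              simp [Finsupp.single_apply, Ne.symm hjj]
          | inr s' =>
              simp only [hρ']
              simp
    | inr s =>
        refine ⟨(0, DirectSum.of (fun i => ZMod (q i)) s.1 ((z.val : ZMod (q s.1)))), ?_⟩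
        intro t'
        by_cases htt : t' = t
        · subst htt
          rw [hχ]
          simp only [hρ]
          simp [DirectSum.of_eq_same, ZMod.natCast_val, ZMod.cast_id]
        · have hne : ρ t' ≠ ρ t := fun h => htt (ρ.injective h)
          rw [Pi.single_eq_of_ne htt]
          rw [hχ]
          cases hρ' : ρ t' with
          | inl j' =>
              simp only [hρ']
              simp
          | inr s' =>
              have hss : s'.1 ≠ s.1 := by
                intro h
                exact hne (by rw [hρ', hρ]; exact congrArg Sum.inr (Subtype.ext h))
              simp only [hρ']
              simp [DirectSum.of_eq_of_ne _ _ _ hss]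
  choose x hx using hsingle
  refine ⟨∑ t, x t (w t), ?_⟩
  funext t'
  simp only [AddMonoidHom.mk'_apply]
  rw [map_sum (χ t') _ Finset.univ]
  calc (∑ t, (χ t') (x t (w t))) = ∑ t, (Pi.single t (w t) : Fin (n+1) → ZMod P) t' := by
        apply Finset.sum_congr rfl
        intro t _
        exact hx t (w t) t'
    _ = w t' := by rw [← Finset.sum_apply (a := t') (g := fun t => Pi.single t (w t)),
        Finset.univ_sum_single]
end B2C
section B2C2
open DirectSum
variable {ι : Type} [Fintype ι]

lemma aux_gen {r n : ℕ} (p e : ι → ℕ) (hp : ∀ i, (p i).Prime)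
    (hbound : ∀ P : ℕ, P.Prime →
      r + (Finset.univ.filter fun i => p i = P ∧ p i ^ e i ≠ 1).card ≤ n) :
    ∃ h : (Fin n → ℤ) →+ ((Fin r →₀ ℤ) × ⨁ i, ZMod (p i ^ e i)),
      Function.Surjective h := by
  classical
  set q : ι → ℕ := fun i => p i ^ e i with hq
  have hbound' : ∀ P : ℕ, P.Prime →
      r + (Finset.univ.filter fun i => p i = P ∧ q i ≠ 1).card ≤ n := by
    intro P hP
    simpa [hq] using hbound P hP
  have hrn : r ≤ n := le_trans (Nat.le_add_right _ _) (hbound' 2 Nat.prime_two)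
  set ord : ι → ℕ := fun i => ((Fintype.equivFin ι) i : ℕ) with hord
  have hordinj : Function.Injective ord := fun a b hab =>
    (Fintype.equivFin ι).injective (Fin.val_injective hab)
  set slot : ι → ℕ := fun i =>
    (Finset.univ.filter fun j => p j = p i ∧ q j ≠ 1 ∧ ord j < ord i).card with hslot
  have hslot_lt : ∀ i, q i ≠ 1 → r + slot i < n := by
    intro i hi
    have h1 : slot i < (Finset.univ.filter fun j => p j = p i ∧ q j ≠ 1).card := by
      apply Finset.card_lt_card
      constructor
      · intro j hj
        rw [Finset.mem_filter] at hj ⊢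
        exact ⟨hj.1, hj.2.1, hj.2.2.1⟩
      · intro hsub
        have hmem : i ∈ Finset.univ.filter fun j => p j = p i ∧ q j ≠ 1 := by
          rw [Finset.mem_filter]; exact ⟨Finset.mem_univ _, rfl, hi⟩
        have := hsub hmem
        rw [Finset.mem_filter] at this
        exact lt_irrefl _ this.2.2.2
    have h2 := hbound' (p i) (hp i)
    omega
  have hslot_inj : ∀ i i', q i ≠ 1 → q i' ≠ 1 → p i = p i' → i ≠ i' → slot i ≠ slot i' := by
    have key : ∀ i i', q i ≠ 1 → q i' ≠ 1 → p i = p i' → ord i < ord i' → slot i < slot i' := by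
      intro i i' hi hi' hpp hlt
      apply Finset.card_lt_card
      constructor
      · intro j hj
        rw [Finset.mem_filter] at hj ⊢
        exact ⟨hj.1, hj.2.1.trans hpp, hj.2.2.1, hj.2.2.2.trans hlt⟩
      · intro hsub
        have hmem : i ∈ Finset.univ.filter fun j => p j = p i' ∧ q j ≠ 1 ∧ ord j < ord i' := by
          rw [Finset.mem_filter]; exact ⟨Finset.mem_univ _, hpp, hi, hlt⟩
        have := hsub hmem
        rw [Finset.mem_filter] at this
        exact lt_irrefl _ this.2.2.2
    intro i i' hi hi' hpp hne
    rcases lt_trichotomy (ord i) (ord i') with h | h | h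
    · exact ne_of_lt (key i i' hi hi' hpp h)
    · exact absurd (hordinj h) hne
    · exact (ne_of_lt (key i' i hi' hi hpp.symm h)).symm
  -- the two component homomorphisms
  set sel : (Fin n → ℤ) → ι → ℤ := fun v i =>
    if h : r + slot i < n then v ⟨r + slot i, h⟩ else 0 with hsel
  have hseladd : ∀ v w i, sel (v + w) i = sel v i + sel w i := by
    intro v w i
    by_cases h : r + slot i < n
    · simp only [hsel, dif_pos h]; rfl
    · simp only [hsel, dif_neg h]; ring
  set h1 : (Fin n → ℤ) →+ (Fin r →₀ ℤ) :=
    Finsupp.addEquivFunOnFinite.symm.toAddMonoidHom.comp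
      (AddMonoidHom.mk' (fun v (j : Fin r) => v (Fin.castLE hrn j)) (fun a b => rfl)) with hh1
  have hh1app : ∀ v, h1 v = Finsupp.addEquivFunOnFinite.symm (fun j : Fin r => v (Fin.castLE hrn j)) :=
    fun v => rfl
  set h2 : (Fin n → ℤ) →+ (⨁ i, ZMod (q i)) :=
    AddMonoidHom.mk' (fun v => ∑ i : ι, sel v i • DirectSum.of (fun i => ZMod (q i)) i 1)
      (fun v w => by
        rw [← Finset.sum_add_distrib]
        apply Finset.sum_congr rfl
        intro i _
        rw [hseladd, add_smul]) with hh2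
  have hh2app : ∀ v, h2 v = ∑ i : ι, sel v i • DirectSum.of (fun i => ZMod (q i)) i 1 :=
    fun v => rfl
  refine ⟨h1.prod h2, ?_⟩
  have hsel_zero : ∀ (v : Fin n → ℤ), (∀ j : Fin n, r ≤ (j : ℕ) → v j = 0) → ∀ i, sel v i = 0 := by
    intro v hv i
    by_cases h : r + slot i < n
    · simp only [hsel, dif_pos h]
      exact hv _ (by simp)
    · simp only [hsel, dif_neg h]
  have hfst : ∀ x : Fin r →₀ ℤ, ∃ v, h1 v = x ∧ h2 v = 0 := by
    intro x
    set v : Fin n → ℤ := fun j => if h : (j : ℕ) < r then x ⟨j, h⟩ else 0 with hv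
    refine ⟨v, ?_, ?_⟩
    · rw [hh1app]
      have : (fun j : Fin r => v (Fin.castLE hrn j)) = fun j : Fin r => x j := by
        funext j
        simp only [hv]
        rw [dif_pos (show ((Fin.castLE hrn j : Fin n) : ℕ) < r from j.2)]
        exact congrArg x (Fin.ext rfl)
      rw [this]
      exact Finsupp.addEquivFunOnFinite.symm_apply_apply x
    · rw [hh2app]
      apply Finset.sum_eq_zero
      intro i _
      rw [hsel_zero v (fun j hj => by simp only [hv]; rw [dif_neg (by omega)]) i, zero_smul]
  have hsnd : ∀ y : ⨁ i, ZMod (q i), ∃ v, h1 v = 0 ∧ h2 v = y := by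
    have hzero : h1 0 = 0 ∧ h2 0 = 0 := ⟨map_zero _, map_zero _⟩
    intro y
    induction y using DirectSum.induction_on with
    | zero => exact ⟨0, hzero.1, hzero.2⟩
    | add y₁ y₂ ih₁ ih₂ =>
        obtain ⟨w₁, hw₁, hw₁'⟩ := ih₁
        obtain ⟨w₂, hw₂, hw₂'⟩ := ih₂
        exact ⟨w₁ + w₂, by rw [map_add, hw₁, hw₂, add_zero],
          by rw [map_add, hw₁', hw₂']⟩
    | of i₀ z =>
        by_cases hq1 : q i₀ = 1
        · haveI : Subsingleton (ZMod (q i₀)) := by rw [hq1]; infer_instance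
          have hz : z = 0 := Subsingleton.elim _ _
          exact ⟨0, hzero.1, by
            rw [hz, map_zero (DirectSum.of (fun i => ZMod (q i)) i₀)]
            exact hzero.2⟩
        · have hb : r + slot i₀ < n := hslot_lt i₀ hq1
          haveI : NeZero (q i₀) := ⟨by simp only [hq]; exact pow_ne_zero _ (hp i₀).ne_zero⟩
          set bad : Finset ι := Finset.univ.filter
            (fun i => i ≠ i₀ ∧ q i ≠ 1 ∧ slot i = slot i₀) with hbad
          set M : ℕ := ∏ i ∈ bad, q i with hM
          have hMco : M.Coprime (q i₀) := by
            apply Nat.Coprime.prod_left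
            intro i hi
            rw [hbad, Finset.mem_filter] at hi
            obtain ⟨-, hine, hiq, hislot⟩ := hi
            have hpne : p i ≠ p i₀ := fun hpp => hslot_inj i i₀ hiq hq1 hpp hine hislot
            simp only [hq]
            exact Nat.Coprime.pow _ _ ((Nat.coprime_primes (hp i) (hp i₀)).2 hpne)
          set u : (ZMod (q i₀))ˣ := ZMod.unitOfCoprime M hMco with hu
          set y' : ℤ := (((u⁻¹ : (ZMod (q i₀))ˣ) * z : ZMod (q i₀)).val : ℤ) with hy'
          set v : Fin n → ℤ := fun j => if j = ⟨r + slot i₀, hb⟩ then (M : ℤ) * y' else 0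
            with hv
          have hvlow : ∀ j : Fin n, (j : ℕ) < r → v j = 0 := by
            intro j hj
            simp only [hv]
            rw [if_neg]
            intro hjeq
            rw [hjeq] at hj
            have h' : r + slot i₀ < r := by simpa using hj
            omega
          refine ⟨v, ?_, ?_⟩
          · rw [hh1app]
            have : (fun j : Fin r => v (Fin.castLE hrn j)) = fun _ : Fin r => (0 : ℤ) := by
              funext j
              exact hvlow _ j.2
            rw [this]
            exact map_zero (Finsupp.addEquivFunOnFinite (M := ℤ) (ι := Fin r)).symm
          · rw [hh2app]
            rw [Finset.sum_eq_single i₀]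
            · have hsel0 : sel v i₀ = (M : ℤ) * y' := by
                simp only [hsel, dif_pos hb, hv, if_pos rfl]
                simp
              rw [hsel0, ← map_zsmul]
              congr 1
              rw [zsmul_eq_mul, mul_one, hy']
              push_cast
              rw [ZMod.natCast_val, ZMod.cast_id]
              have hMu : ((M : ℕ) : ZMod (q i₀)) = (u : ZMod (q i₀)) := by
                rw [hu, ZMod.coe_unitOfCoprime]
              rw [hMu]
              exact Units.mul_inv_cancel_left u z
            · intro i _ hine
              by_cases h : r + slot i < n
              · by_cases hsl : slot i = slot i₀
                · have hseli : sel v i = (M : ℤ) * y' := by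
                    simp only [hsel, dif_pos h, hv]
                    rw [if_pos (by rw [Fin.mk.injEq]; omega)]
                  rw [hseli]
                  by_cases hiq : q i = 1
                  · haveI : Subsingleton (ZMod (q i)) := by rw [hiq]; infer_instance
                    rw [show (1 : ZMod (q i)) = 0 from Subsingleton.elim _ _]
                    simp
                  · have hidvd : q i ∣ M := by
                      rw [hM]
                      exact Finset.dvd_prod_of_mem _
                        (by rw [hbad, Finset.mem_filter]
                            exact ⟨Finset.mem_univ _, hine, hiq, hsl⟩)
                    have hz0 : ((M : ℤ) * y') • (1 : ZMod (q i)) = 0 := by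
                      rw [zsmul_eq_mul, mul_one]
                      push_cast
                      rw [show ((M : ℕ) : ZMod (q i)) = 0 from
                        (ZMod.natCast_eq_zero_iff _ _).2 hidvd]
                      ring
                    rw [← map_zsmul, hz0, map_zero]
                · have hseli : sel v i = 0 := by
                    simp only [hsel, dif_pos h, hv]
                    rw [if_neg (by rw [Fin.mk.injEq]; omega)]
                  rw [hseli, zero_smul]
              · have hseli : sel v i = 0 := by simp only [hsel, dif_neg h]
                rw [hseli, zero_smul]
            · intro hni₀
              exact absurd (Finset.mem_univ i₀) hni₀
  intro xy
  obtain ⟨v1, hv1, hv1'⟩ := hfst xy.1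
  obtain ⟨v2, hv2, hv2'⟩ := hsnd xy.2
  refine ⟨v1 + v2, ?_⟩
  have : (h1.prod h2) (v1 + v2) = (h1 v1 + h1 v2, h2 v1 + h2 v2) := by
    rw [AddMonoidHom.prod_apply, map_add, map_add]
  rw [this, hv1, hv1', hv2, hv2']
  simp
end B2C2
section B2C3
variable {G : Type*} [Group G]

lemma aux_b2c (hfg : Group.FG G) (n : ℕ)
    (hw : n + 1 ≤ weight (Abelianization G)) :
    ∃ p : ℕ, p.Prime ∧
      ∃ φ : G →* Multiplicative (Fin (n + 1) → ZMod p), Function.Surjective φ := by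
  classical
  by_contra hns
  push_neg at hns
  have hofsurj : Function.Surjective (Abelianization.of (G := G)) :=
    QuotientGroup.mk'_surjective _
  haveI hfgA : Group.FG (Abelianization G) :=
    Group.fg_of_surjective (f := Abelianization.of) hofsurj
  haveI : AddGroup.FG (Additive (Abelianization G)) := GroupFG.iff_add_fg.1 hfgA
  -- no surjection at the additive level
  have hnsB : ∀ P : ℕ, P.Prime →
      ∀ ψ : Additive (Abelianization G) →+ (Fin (n + 1) → ZMod P),
        ¬ Function.Surjective ψ := by
    intro P hP ψ hsurj
    refine hns P hP ((AddMonoidHom.toMultiplicativeRight ψ).comp Abelianization.of) ?_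
    intro w
    obtain ⟨x, hx⟩ := hsurj (Multiplicative.toAdd w)
    obtain ⟨g, hg⟩ := hofsurj (Additive.toMul x)
    refine ⟨g, ?_⟩
    show (AddMonoidHom.toMultiplicativeRight ψ) (Abelianization.of g) = w
    rw [hg]
    show Multiplicative.ofAdd (ψ x) = w
    rw [hx]
    rfl
  obtain ⟨r, ι, hι, p, hp, e, ⟨ee⟩⟩ :=
    AddCommGroup.equiv_free_prod_directSum_zmod (Additive (Abelianization G))
  haveI := hι
  -- bound on ranks
  have hbound : ∀ P : ℕ, P.Prime →
      r + (Finset.univ.filter fun i => p i = P ∧ p i ^ e i ≠ 1).card ≤ n := by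
    intro P hP
    by_contra hlt
    push_neg at hlt
    obtain ⟨π, hπ⟩ := aux_bound p e hp P hP hlt
    exact hnsB P hP (π.comp (ee : Additive (Abelianization G) ≃+ _).toAddMonoidHom)
      (hπ.comp ee.surjective)
  obtain ⟨h, hh⟩ := aux_gen p e hp hbound
  -- the composed surjection onto `Additive (Abelianization G)`
  set ψ : (Fin n → ℤ) →+ Additive (Abelianization G) :=
    (ee.symm.toAddMonoidHom.comp h) with hψ
  have hψsurj : Function.Surjective ψ := by
    intro a
    obtain ⟨v, hv⟩ := hh (ee a)
    exact ⟨v, by rw [hψ]; simp [AddMonoidHom.comp_apply, hv]⟩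
  -- a generating set of size ≤ n
  set S : Finset (Abelianization G) :=
    Finset.univ.image (fun j : Fin n => Additive.toMul (ψ (Pi.single j (1 : ℤ)))) with hS
  have hScard : S.card ≤ n := le_trans Finset.card_image_le (by simp)
  have hgen : Subgroup.closure (S : Set (Abelianization G)) = ⊤ := by
    rw [eq_top_iff]
    intro a _
    obtain ⟨v, hv⟩ := hψsurj (Additive.ofMul a)
    have hvdecomp : v = ∑ j : Fin n, (v j) • Pi.single j (1 : ℤ) := by
      funext x
      rw [Finset.sum_apply]
      rw [show (∑ j : Fin n, ((v j) • Pi.single j (1 : ℤ)) x)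
          = ∑ j : Fin n, (v j) • (Pi.single j (1 : ℤ) : Fin n → ℤ) x from rfl]
      simp [Pi.single_apply, Finset.sum_ite_eq']
    have : a = Additive.toMul (ψ v) := by rw [hv]; rfl
    rw [this, hvdecomp, map_sum]
    have : ∀ j : Fin n, ψ ((v j) • Pi.single j (1 : ℤ)) = (v j) • ψ (Pi.single j (1 : ℤ)) :=
      fun j => map_zsmul ψ _ _
    rw [Finset.sum_congr rfl (fun j _ => this j)]
    rw [toMul_sum]
    apply Subgroup.prod_mem
    intro j _
    rw [toMul_zsmul]
    apply Subgroup.zpow_mem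
    apply Subgroup.subset_closure
    rw [hS]
    exact Finset.mem_image.2 ⟨j, Finset.mem_univ _, rfl⟩
  -- contradiction with the weight
  have hmem : S.card ∈ {m : ℕ | ∃ T : Finset (Abelianization G), T.card = m ∧
      Subgroup.normalClosure (T : Set (Abelianization G)) = ⊤} := by
    refine ⟨S, rfl, ?_⟩
    rw [eq_top_iff, ← hgen]
    exact (Subgroup.closure_le _).2 Subgroup.subset_normalClosure
  have := Nat.sInf_le hmem
  rw [← weight] at this
  omega
end B2C3
section A2B
variable {G : Type*} [Group G]

lemma aux_a2b (hfg : Group.FG G) (n : ℕ) (hn : 1 ≤ n)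
    (hcov : HasFiniteProperNCovering G n) : n + 1 ≤ weight (Abelianization G) := by
  classical
  by_contra hlt
  push_neg at hlt
  have hofsurj : Function.Surjective (Abelianization.of (G := G)) :=
    QuotientGroup.mk'_surjective _
  haveI hfgA : Group.FG (Abelianization G) := Group.fg_of_surjective (f := Abelianization.of) hofsurj
  obtain ⟨m₀, S₀, hS₀card, hS₀⟩ := Group.fg_iff'.1 hfgA
  have hncS₀ : Subgroup.normalClosure (S₀ : Set (Abelianization G)) = ⊤ := by
    rw [eq_top_iff, ← hS₀]
    exact (Subgroup.closure_le _).2 Subgroup.subset_normalClosure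
  have hne : {m : ℕ | ∃ S : Finset (Abelianization G), S.card = m ∧
      Subgroup.normalClosure (S : Set (Abelianization G)) = ⊤}.Nonempty :=
    ⟨S₀.card, S₀, rfl, hncS₀⟩
  obtain ⟨S, hScard, hSnc⟩ := Nat.sInf_mem hne
  rw [← weight] at hScard
  have hSle : S.card ≤ n := by omega
  -- closure S = ⊤ (abelian)
  have hScl : Subgroup.closure (S : Set (Abelianization G)) = ⊤ := by
    rw [eq_top_iff, ← hSnc]
    exact Subgroup.normalClosure_le_normal Subgroup.subset_closure
  -- lift the generators to a tuple in G
  set l := S.toList with hl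
  have hllen : l.length ≤ n := by rw [hl, Finset.length_toList]; exact hSle
  set u : Fin n → Abelianization G :=
    fun j => if h : (j : ℕ) < l.length then l.get ⟨j, h⟩ else 1 with hu
  have hcoverS : (S : Set (Abelianization G)) ⊆ Set.range u := by
    intro s hs
    have : s ∈ l := by rw [hl, Finset.mem_toList]; exact hs
    obtain ⟨⟨i, hi⟩, rfl⟩ := List.mem_iff_get.1 this
    refine ⟨⟨i, lt_of_lt_of_le hi hllen⟩, ?_⟩
    rw [hu]
    simp only []
    rw [dif_pos hi]
  have hAtop : Subgroup.closure (Set.range u) = ⊤ := by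
    rw [eq_top_iff, ← hScl]
    exact Subgroup.closure_mono hcoverS
  choose g hg using fun j => hofsurj (u j)
  have hkey : Subgroup.closure (Set.range g) ⊔ commutator G = ⊤ := by
    have h1 := Subgroup.comap_map_eq (Abelianization.of) (Subgroup.closure (Set.range g))
    rw [MonoidHom.map_closure] at h1
    have himg : (Abelianization.of (G := G)) '' Set.range g = Set.range u := by
      rw [← Set.range_comp]
      exact congrArg _ (funext hg)
    rw [himg, hAtop] at h1
    have hker : (Abelianization.of (G := G)).ker = commutator G := QuotientGroup.ker_mk' _
    rw [hker] at h1
    rw [← h1, Subgroup.comap_top]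
  -- the covering, enlarged to maximal normal subgroups
  obtain ⟨k, N, hN, hcov'⟩ := hcov
  choose M hNM hM using fun i => aux_exists_max (N i) (hN i).1 (hN i).2.1 (hN i).2.2
  set 𝒮 : Finset (Subgroup G) :=
    (Finset.univ.image M).filter (fun H => ¬ commutator G ≤ H) with h𝒮def
  have h𝒮 : ∀ H ∈ 𝒮, IsMaxNormal H ∧ ¬ commutator G ≤ H := by
    intro H hH
    rw [h𝒮def, Finset.mem_filter] at hH
    obtain ⟨hH1, hH2⟩ := hH
    obtain ⟨i, _, rfl⟩ := Finset.mem_image.1 hH1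
    exact ⟨hM i, hH2⟩
  haveI : NeZero n := ⟨by omega⟩
  obtain ⟨c, hcG, hcnot⟩ := aux_avoid 𝒮 h𝒮 (g 0)
  set t : Fin n → G := fun j => if j = 0 then g 0 * c else g j with ht
  obtain ⟨i, hi⟩ := hcov' t
  have hti : ∀ j, t j ∈ M i := fun j => hNM i (hi j)
  by_cases hcase : commutator G ≤ M i
  · have hgj : ∀ j, g j ∈ M i := by
      intro j
      by_cases hj : j = 0
      · subst hj
        have h0' : g 0 * c ∈ M i := by simpa [ht] using hti 0
        have : (g 0 * c) * c⁻¹ ∈ M i := mul_mem h0' (inv_mem (hcase hcG))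
        simpa using this
      · have := hti j
        rw [ht] at this
        simpa [hj] using this
    have htop : (⊤ : Subgroup G) ≤ M i := by
      rw [← hkey]
      refine sup_le ((Subgroup.closure_le _).2 ?_) hcase
      rintro _ ⟨j, rfl⟩
      exact hgj j
    exact (hM i).2.1 (top_le_iff.1 htop)
  · have hmem𝒮 : M i ∈ 𝒮 := by
      rw [h𝒮def, Finset.mem_filter]
      exact ⟨Finset.mem_image.2 ⟨i, Finset.mem_univ i, rfl⟩, hcase⟩
    exact hcnot (M i) hmem𝒮 (by simpa [ht] using hti 0)
end A2B

/-- A finitely generated group `G` has a finite proper `n`-covering by normal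
finite-index subgroups iff `w(G^ab) ≥ n + 1`, equivalently iff `G` surjects onto the
elementary abelian `p`-group `(C_p)^{n+1}` of rank `n + 1` for some prime `p`. -/
theorem hasFiniteProperNCovering_iff
    (G : Type*) [Group G] (hfg : Group.FG G) (n : ℕ) (hn : 1 ≤ n) :
    (HasFiniteProperNCovering G n ↔ n + 1 ≤ weight (Abelianization G)) ∧
    (HasFiniteProperNCovering G n ↔
      ∃ p : ℕ, p.Prime ∧
        ∃ φ : G →* Multiplicative (Fin (n + 1) → ZMod p), Function.Surjective φ) := by
  have hc2a : (∃ p : ℕ, p.Prime ∧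
      ∃ φ : G →* Multiplicative (Fin (n + 1) → ZMod p), Function.Surjective φ) →
      HasFiniteProperNCovering G n := by
    rintro ⟨p, hp, φ, hφ⟩
    exact aux_c2a hp φ hφ
  have ha2b := aux_a2b hfg n hn
  have hb2c := aux_b2c hfg n
  exact ⟨⟨ha2b, fun hb => hc2a (hb2c hb)⟩, ⟨fun ha => hb2c (ha2b ha), hc2a⟩⟩
end

section
/- Let G be a finitely generated abelian group and n ≥ 1 an integer. Then G is n-finitely annihilated if and only if the weight of G is at least n+1. -/
/-- A group `G` is *`n`-finitely annihilated* if every collection of `n` elements of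
`G` lies in some proper normal finite-index subgroup of `G`. -/
def NFinitelyAnnihilated (G : Type*) [Group G] (n : ℕ) : Prop :=
  ∀ f : Fin n → G, ∃ N : Subgroup G, N.Normal ∧ N ≠ ⊤ ∧ N.FiniteIndex ∧ ∀ j, f j ∈ N

/-- In a finitely generated group, every proper subgroup is contained in a maximal
proper subgroup. -/
private lemma exists_maximal_subgroup {G : Type*} [Group G] (hfg : Group.FG G)
    {H : Subgroup G} (hH : H ≠ ⊤) :
    ∃ M : Subgroup G, H ≤ M ∧ M ≠ ⊤ ∧ ∀ K : Subgroup G, M < K → K = ⊤ := by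
  classical
  obtain ⟨m, T, hTcard, hTclo⟩ := Group.fg_iff'.mp hfg
  have key : ∀ c ⊆ {K : Subgroup G | K ≠ ⊤}, IsChain (· ≤ ·) c → ∀ y ∈ c,
      ∃ ub ∈ {K : Subgroup G | K ≠ ⊤}, ∀ z ∈ c, z ≤ ub := by
    intro c hcs hchain y hy
    haveI : Nonempty c := ⟨⟨y, hy⟩⟩
    have hdir : Directed (· ≤ ·) (fun K : c => (K : Subgroup G)) :=
      directedOn_iff_directed.mp hchain.directedOn
    refine ⟨⨆ K : c, (K : Subgroup G), ?_,
      fun z hz => le_iSup (fun K : c => (K : Subgroup G)) ⟨z, hz⟩⟩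
    intro htop
    have hmem : ∀ t ∈ T, ∃ K ∈ c, t ∈ K := by
      intro t ht
      have h1 : t ∈ (⨆ K : c, (K : Subgroup G)) := htop ▸ Subgroup.mem_top t
      obtain ⟨⟨K, hKc⟩, hK⟩ := (Subgroup.mem_iSup_of_directed hdir).mp h1
      exact ⟨K, hKc, hK⟩
    have key2 : ∀ t : Finset G, (∀ a ∈ t, ∃ K ∈ c, a ∈ K) → ∃ K ∈ c, ∀ a ∈ t, a ∈ K := by
      intro t
      induction t using Finset.induction_on with
      | empty => exact fun _ => ⟨y, hy, by simp⟩
      | @insert a t ha ih =>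
        intro h
        obtain ⟨K, hKc, hK⟩ := ih (fun b hb => h b (Finset.mem_insert_of_mem hb))
        obtain ⟨K', hK'c, hK'⟩ := h a (Finset.mem_insert_self a t)
        obtain ⟨L, hLc, hKL, hK'L⟩ := hchain.directedOn K hKc K' hK'c
        refine ⟨L, hLc, fun b hb => ?_⟩
        rcases Finset.mem_insert.mp hb with rfl | hb
        · exact hK'L hK'
        · exact hKL (hK b hb)
    obtain ⟨K₀, hK₀c, hK₀⟩ := key2 T hmem
    have hTK : (T : Set G) ⊆ (K₀ : Set G) := fun t ht => hK₀ t ht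
    have : K₀ = ⊤ := top_le_iff.mp (hTclo ▸ (Subgroup.closure_le _).mpr hTK)
    exact hcs hK₀c this
  obtain ⟨M, hHM, hMmax⟩ := zorn_le_nonempty₀ {K : Subgroup G | K ≠ ⊤} key H hH
  refine ⟨M, hHM, hMmax.prop, fun K hMK => ?_⟩
  by_contra hK
  have hKM : K ≤ M := hMmax.2 hK hMK.le
  exact (hMK : M < K).not_ge hKM

/-- A maximal proper subgroup of an abelian group has finite index. -/
private lemma maximal_finiteIndex {G : Type*} [CommGroup G] {M : Subgroup G}
    (hM : M ≠ ⊤) (hmax : ∀ K : Subgroup G, M < K → K = ⊤) : M.FiniteIndex := by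
  obtain ⟨x, hx⟩ : ∃ x, x ∉ M := by
    by_contra h; push_neg at h; exact hM ((Subgroup.eq_top_iff' M).mpr h)
  set q : G ⧸ M := QuotientGroup.mk x with hqdef
  have hq1 : q ≠ 1 := by
    simpa [hqdef, QuotientGroup.eq_one_iff] using hx
  have hq : IsOfFinOrder q := by
    by_contra hinf
    by_cases h2 : x * x ∈ M
    · refine hinf (isOfFinOrder_iff_pow_eq_one.mpr ⟨2, two_pos, ?_⟩)
      have : q * q = 1 := by
        rw [hqdef, ← QuotientGroup.mk_mul, QuotientGroup.eq_one_iff]; exact h2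
      rwa [pow_two]
    · set K := Subgroup.comap (QuotientGroup.mk' M) (Subgroup.zpowers (q * q)) with hKdef
      have hMK : M < K := by
        refine lt_of_le_of_ne (fun m hm => ?_) (fun hEq => h2 ?_)
        · show QuotientGroup.mk' M m ∈ Subgroup.zpowers (q * q)
          have : QuotientGroup.mk' M m = 1 := (QuotientGroup.eq_one_iff m).mpr hm
          rw [this]; exact one_mem _
        · have hxxK : x * x ∈ K := by
            show QuotientGroup.mk' M (x * x) ∈ Subgroup.zpowers (q * q)
            rw [map_mul]
            exact Subgroup.mem_zpowers _
          rwa [← hEq] at hxxK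
      have hK := hmax K hMK
      have hxK : x ∈ K := hK ▸ Subgroup.mem_top x
      obtain ⟨k, hk⟩ := hxK
      apply hinf
      refine isOfFinOrder_iff_zpow_eq_one.mpr ⟨2 * k - 1, ?_, ?_⟩
      · omega
      · have hk' : (q * q) ^ k = q := hk
        have h2k : q ^ (2 * k) = q := by
          rw [two_mul, zpow_add, ← mul_zpow, hk']
        rw [zpow_sub, h2k, zpow_one, mul_inv_cancel]
  have htop : Subgroup.zpowers q = ⊤ := by
    have hK' : Subgroup.comap (QuotientGroup.mk' M) (Subgroup.zpowers q) = ⊤ := by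
      apply hmax
      refine lt_of_le_of_ne (fun m hm => ?_) (fun hEq => hx ?_)
      · show QuotientGroup.mk' M m ∈ Subgroup.zpowers q
        have : QuotientGroup.mk' M m = 1 := (QuotientGroup.eq_one_iff m).mpr hm
        rw [this]; exact one_mem _
      · have hxK : x ∈ Subgroup.comap (QuotientGroup.mk' M) (Subgroup.zpowers q) :=
          Subgroup.mem_zpowers _
        rwa [← hEq] at hxK
    rw [eq_top_iff]
    rintro y -
    obtain ⟨g, rfl⟩ := QuotientGroup.mk_surjective y
    have : g ∈ Subgroup.comap (QuotientGroup.mk' M) (Subgroup.zpowers q) :=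
      hK' ▸ Subgroup.mem_top g
    exact this
  have hfin : Finite (G ⧸ M) := by
    have hfin' : (Subgroup.zpowers q : Set (G ⧸ M)).Finite := finite_zpowers.mpr hq
    rw [htop] at hfin'
    rw [Subgroup.coe_top] at hfin'
    exact Set.finite_univ_iff.mp hfin'
  haveI := hfin
  exact Subgroup.finiteIndex_of_finite_quotient

/-- A finitely generated abelian group is `n`-finitely annihilated iff its weight is at
least `n + 1`. -/
theorem nFinitelyAnnihilated_iff_weight
    (G : Type*) [CommGroup G] (hfg : Group.FG G) (n : ℕ) (hn : 1 ≤ n) :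
    NFinitelyAnnihilated G n ↔ n + 1 ≤ weight G := by
  classical
  have hncW : ∀ s : Set G, Subgroup.normalClosure s = Subgroup.closure s := fun s =>
    le_antisymm (Subgroup.normalClosure_le_normal Subgroup.subset_closure)
      ((Subgroup.closure_le _).mpr Subgroup.subset_normalClosure)
  constructor
  · intro hFA
    by_contra hlt
    push_neg at hlt
    have hWne : {m : ℕ | ∃ S : Finset G, S.card = m ∧
        Subgroup.normalClosure (S : Set G) = ⊤}.Nonempty := by
      obtain ⟨m, S, hcard, hclo⟩ := Group.fg_iff'.mp hfg
      exact ⟨S.card, S, rfl, by rw [hncW]; exact hclo⟩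
    have hmem := Nat.sInf_mem hWne
    obtain ⟨S, hcard, hclo⟩ := hmem
    have hSn : S.card ≤ n := by
      have : weight G ≤ n := by omega
      rw [hcard]; exact this
    set f : Fin n → G := fun j => S.toList.getD j 1 with hfdef
    obtain ⟨N, hnorm, hne, hfi, hmemN⟩ := hFA f
    haveI := hnorm
    have hSN : (S : Set G) ⊆ (N : Set G) := by
      intro s hs
      obtain ⟨i, hi, hgi⟩ := List.mem_iff_getElem.mp (Finset.mem_toList.mpr hs)
      have hi' : i < S.card := by rwa [Finset.length_toList] at hi
      have hilt : i < n := lt_of_lt_of_le hi' hSn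
      have : f ⟨i, hilt⟩ = s := by
        rw [hfdef]
        simp only
        rw [List.getD_eq_getElem _ _ hi]
        exact hgi
      rw [← this]
      exact hmemN ⟨i, hilt⟩
    exact hne (top_le_iff.mp (hclo ▸ Subgroup.normalClosure_le_normal hSN))
  · intro hw f
    have hne : Subgroup.closure (Set.range f) ≠ ⊤ := by
      intro h
      have hmemW : (Finset.univ.image f).card ∈ {m : ℕ | ∃ S : Finset G, S.card = m ∧
          Subgroup.normalClosure (S : Set G) = ⊤} := by
        refine ⟨Finset.univ.image f, rfl, ?_⟩
        rw [hncW, Finset.coe_image, Finset.coe_univ, Set.image_univ]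
        exact h
      have h1 : weight G ≤ (Finset.univ.image f).card := Nat.sInf_le hmemW
      have h2 : (Finset.univ.image f).card ≤ n :=
        Finset.card_image_le.trans (by simp)
      omega
    obtain ⟨M, hHM, hMne, hMmax⟩ := exists_maximal_subgroup hfg hne
    exact ⟨M, inferInstance, hMne, maximal_finiteIndex hMne hMmax,
      fun j => hHM (Subgroup.subset_closure ⟨j, rfl⟩)⟩
end
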